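/- arXiv:1502.04805 — 5 statements merged into one kernel-verified Lean document; each statement's English description precedes it below -/
import Mathlib

section
/- Let d ≥ 1, r ≥ 2, and N = (d+1)(r−1) + 1. If x_1, …, x_N are N points of ℝ^d in general position, then there is a partition of {x_1, …, x_N} into r pairwise disjoint subsets F_1, F_2, …, F_r such that the convex hulls of F_1, …, F_r have a common point: conv(F_1) ∩ conv(F_2) ∩ ⋯ ∩ conv(F_r) ≠ ∅. -/
open Finset

local notation "⟪" x ", " y "⟫" => @inner ℝ _ _ x y

private lemma pos_of_quad {α β : ℝ} (h : ∀ t : ℝ, 0 < t → t ≤ 1 → 0 ≤ β * t + α * t ^ 2) :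
    0 ≤ β := by
  by_contra hb
  push_neg at hb
  rcases le_or_gt α 0 with ha | ha
  · nlinarith [h 1 one_pos le_rfl]
  · have ht0 : 0 < min 1 (-β / (2 * α)) :=
      lt_min one_pos (div_pos (by linarith) (by linarith))
    have h1 := h _ ht0 (min_le_left _ _)
    have h2 : min 1 (-β / (2 * α)) ≤ -β / (2 * α) := min_le_right _ _
    have h3 : α * min 1 (-β / (2 * α)) ≤ -β / 2 := by
      calc α * min 1 (-β / (2 * α)) ≤ α * (-β / (2 * α)) :=
            mul_le_mul_of_nonneg_left h2 ha.le
        _ = -β / 2 := by field_simp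
    nlinarith [mul_le_mul_of_nonneg_right h3 ht0.le]

private lemma inner_expand {W : Type*} [NormedAddCommGroup W] [InnerProductSpace ℝ W]
    (p z : W) (t : ℝ) :
    ⟪p + t • z, p + t • z⟫ = ⟪p, p⟫ + (2 * ⟪p, z⟫) * t + ⟪z, z⟫ * t ^ 2 := by
  rw [real_inner_add_add_self, real_inner_smul_right, real_inner_smul_left,
    real_inner_smul_right]
  ring

private lemma move_vertex {W : Type*} [AddCommGroup W] [Module ℝ W] {n : ℕ} (y : Fin n → W)
    (l : Fin n → ℝ) (i0 : Fin n) (t : ℝ) :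
    ∑ i, ((1 - t) * l i + t * (if i = i0 then 1 else 0)) • y i
      = (1 - t) • (∑ i, l i • y i) + t • y i0 := by
  rw [Finset.sum_congr rfl (fun i _ => add_smul _ _ (y i)), Finset.sum_add_distrib]
  congr 1
  · rw [Finset.smul_sum]
    exact Finset.sum_congr rfl fun i _ => by rw [mul_smul]
  · rw [show t • y i0 = ∑ i, (if i = i0 then t • y i else 0) by
      rw [Finset.sum_ite_eq' univ i0 (fun i => t • y i)]; simp]
    exact Finset.sum_congr rfl fun i _ => by split_ifs <;> simp [mul_smul]

private lemma move_vertex_mem {n : ℕ} {l : Fin n → ℝ} (hl : l ∈ stdSimplex ℝ (Fin n))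
    (i0 : Fin n) {t : ℝ} (ht0 : 0 ≤ t) (ht1 : t ≤ 1) :
    (fun i => (1 - t) * l i + t * (if i = i0 then 1 else 0)) ∈ stdSimplex ℝ (Fin n) := by
  constructor
  · intro i
    have := hl.1 i
    show 0 ≤ (1 - t) * l i + t * (if i = i0 then 1 else 0)
    split_ifs <;> nlinarith
  · rw [Finset.sum_add_distrib, ← Finset.mul_sum, hl.2, ← Finset.mul_sum]
    rw [Finset.sum_ite_eq' univ i0 (fun _ => (1:ℝ))]
    simp

theorem colorful_caratheodory {W : Type*} [NormedAddCommGroup W] [InnerProductSpace ℝ W]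
    [FiniteDimensional ℝ W] {n : ℕ} (hn : Module.finrank ℝ W + 1 = n)
    {ι : Type*} [Fintype ι] [Nonempty ι] (u : Fin n → ι → W)
    (h0 : ∀ i, ∃ μ : ι → ℝ, (∀ j, 0 ≤ μ j) ∧ ∑ j, μ j = 1 ∧ ∑ j, μ j • u i j = 0) :
    ∃ (c : Fin n → ι) (l : Fin n → ℝ), (∀ i, 0 ≤ l i) ∧ ∑ i, l i = 1 ∧
      ∑ i, l i • u i (c i) = 0 := by
  classical
  have hn1 : 0 < n := by omega
  set K := stdSimplex ℝ (Fin n) with hK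
  have hKc : IsCompact K := isCompact_stdSimplex _ _
  have hKne : K.Nonempty := by
    refine ⟨fun _ => (n : ℝ)⁻¹, fun _ => by positivity, ?_⟩
    rw [Finset.sum_const, card_univ, Fintype.card_fin, nsmul_eq_mul]
    field_simp
  have hmin : ∀ c : Fin n → ι, ∃ l ∈ K,
      ∀ l' ∈ K, ‖∑ i, l i • u i (c i)‖ ≤ ‖∑ i, l' i • u i (c i)‖ := by
    intro c
    have hcont : Continuous fun l : Fin n → ℝ => ‖∑ i, l i • u i (c i)‖ :=
      (continuous_finset_sum _ fun i _ => (continuous_apply i).smul continuous_const).norm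
    obtain ⟨l, hl, hm⟩ := hKc.exists_isMinOn hKne hcont.continuousOn
    exact ⟨l, hl, fun l' hl' => hm hl'⟩
  choose lam hlamK hlam using hmin
  obtain ⟨c₀, hc₀⟩ := Finite.exists_min fun c : Fin n → ι => ‖∑ i, lam c i • u i (c i)‖
  set l0 := lam c₀ with hl0
  set y : Fin n → W := fun i => u i (c₀ i) with hy
  set p : W := ∑ i, l0 i • y i with hp
  have hglob : ∀ (c : Fin n → ι), ∀ l ∈ K, ‖p‖ ≤ ‖∑ i, l i • u i (c i)‖ :=
    fun c l hl => (hc₀ c).trans (hlam c l hl)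
  by_cases hp0 : p = 0
  · exact ⟨c₀, l0, (hlamK c₀).1, (hlamK c₀).2, hp0⟩
  exfalso
  have hm : 0 < ⟪p, p⟫ :=
    lt_of_le_of_ne real_inner_self_nonneg (Ne.symm (inner_self_ne_zero.2 hp0))
  -- squared minimality
  have hglob2 : ∀ (c : Fin n → ι), ∀ l ∈ K,
      ⟪p, p⟫ ≤ ⟪∑ i, l i • u i (c i), ∑ i, l i • u i (c i)⟫ := by
    intro c l hl
    rw [real_inner_self_eq_norm_sq, real_inner_self_eq_norm_sq]
    exact pow_le_pow_left₀ (norm_nonneg _) (hglob c l hl) 2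
  -- first variation: for every i, ⟪p, y i - p⟫ ≥ 0
  have hvar : ∀ i : Fin n, 0 ≤ ⟪p, y i - p⟫ := by
    intro i
    have hq : 0 ≤ 2 * ⟪p, y i - p⟫ := by
      apply pos_of_quad (α := ⟪y i - p, y i - p⟫)
      intro t ht0 ht1
      have hmem := move_vertex_mem (hlamK c₀) i ht0.le ht1
      have hsum := move_vertex y l0 i t
      have hle := hglob2 c₀ _ hmem
      rw [hsum] at hle
      have hrw : (1 - t) • p + t • y i = p + t • (y i - p) := by
        rw [sub_smul, one_smul, smul_sub]; abel
      rw [← hp, hrw, inner_expand] at hle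
      nlinarith [hle]
    linarith
  -- the support relation
  have hsupp : ∀ i : Fin n, l0 i * ⟪p, y i - p⟫ = 0 := by
    have hzero : ∑ i, l0 i • (y i - p) = 0 := by
      rw [Finset.sum_congr rfl fun i _ => smul_sub (l0 i) (y i) p, Finset.sum_sub_distrib,
        ← hp, ← Finset.sum_smul, (hlamK c₀).2, one_smul, sub_self]
    have h1 : ∑ i, l0 i * ⟪p, y i - p⟫ = 0 := by
      have : ⟪p, ∑ i, l0 i • (y i - p)⟫ = (0 : ℝ) := by rw [hzero, inner_zero_right]
      rw [inner_sum] at this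
      simpa [real_inner_smul_right] using this
    intro i
    have := (Finset.sum_eq_zero_iff_of_nonneg (fun i _ =>
      mul_nonneg ((hlamK c₀).1 i) (hvar i))).1 h1
    exact this i (mem_univ i)
  -- Step A: find a minimizer with a zero coordinate
  have stepA : ∃ l1 ∈ K, (∑ i, l1 i • y i) = p ∧ ∃ i0, l1 i0 = 0 := by
    by_cases hall : ∃ i, l0 i = 0
    · exact ⟨l0, hlamK c₀, hp.symm, hall⟩
    push_neg at hall
    have hpos : ∀ i, 0 < l0 i := fun i => ((hlamK c₀).1 i).lt_of_ne (Ne.symm (hall i))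
    have heq : ∀ i, ⟪p, y i⟫ = ⟪p, p⟫ := by
      intro i
      have h1 := hsupp i
      have h2 : ⟪p, y i - p⟫ = 0 := by
        rcases mul_eq_zero.1 h1 with h | h
        · exact absurd h (hall i)
        · exact h
      rw [inner_sub_right] at h2
      linarith
    have hdep : ¬ LinearIndependent ℝ y := by
      intro hLI
      have := hLI.fintype_card_le_finrank
      rw [Fintype.card_fin] at this
      omega
    obtain ⟨w, hw0, i1, hi1⟩ := Fintype.not_linearIndependent_iff.1 hdep
    have hwsum : ∑ i, w i = 0 := by
      have h1 : ⟪p, ∑ i, w i • y i⟫ = (0:ℝ) := by rw [hw0, inner_zero_right]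
      rw [inner_sum] at h1
      have h2 : ∑ i, w i * ⟪p, p⟫ = (0:ℝ) := by
        rw [← h1]
        exact Finset.sum_congr rfl fun i _ => by rw [real_inner_smul_right, heq i]
      rw [← Finset.sum_mul] at h2
      rcases mul_eq_zero.1 h2 with h | h
      · exact h
      · exact absurd h (ne_of_gt hm)
    -- wlog there's a positive coordinate of w
    obtain ⟨w', hw'0, hw'sum, i2, hi2⟩ :
        ∃ w' : Fin n → ℝ, (∑ i, w' i • y i = 0) ∧ (∑ i, w' i = 0) ∧ ∃ i2, 0 < w' i2 := by
      rcases lt_trichotomy (w i1) 0 with h | h | h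
      · refine ⟨fun i => -w i, ?_, ?_, i1, by simp only []; linarith⟩
        · rw [show ∑ i, (fun i => -w i) i • y i = -∑ i, w i • y i by
            rw [← Finset.sum_neg_distrib]
            exact Finset.sum_congr rfl fun i _ => by simp [neg_smul]]
          rw [hw0, neg_zero]
        · rw [Finset.sum_neg_distrib, hwsum, neg_zero]
      · exact absurd h hi1
      · exact ⟨w, hw0, hwsum, i1, h⟩
    set P := univ.filter (fun i => 0 < w' i) with hP
    have hPne : P.Nonempty := ⟨i2, by simp [hP, hi2]⟩
    obtain ⟨i0, hi0P, hi0min⟩ := Finset.exists_min_image P (fun i => l0 i / w' i) hPne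
    have hwi0 : 0 < w' i0 := by simpa [hP] using hi0P
    set t := l0 i0 / w' i0 with htdef
    have ht0 : 0 < t := div_pos (hpos i0) hwi0
    refine ⟨fun i => l0 i - t * w' i, ⟨?_, ?_⟩, ?_, i0, ?_⟩
    · intro i
      show 0 ≤ l0 i - t * w' i
      rcases le_or_gt (w' i) 0 with h | h
      · have : t * w' i ≤ 0 := mul_nonpos_of_nonneg_of_nonpos ht0.le h
        have := (hpos i).le
        linarith
      · have hiP : i ∈ P := by simp [hP, h]
        have := hi0min i hiP
        rw [div_le_div_iff₀ hwi0 h] at this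
        have h2 : t * w' i ≤ l0 i := by
          rw [htdef, div_mul_eq_mul_div, div_le_iff₀ hwi0]
          nlinarith
        linarith
    · rw [Finset.sum_sub_distrib, (hlamK c₀).2, ← Finset.mul_sum, hw'sum, mul_zero, sub_zero]
    · rw [Finset.sum_congr rfl fun i _ => sub_smul (l0 i) (t * w' i) (y i),
        Finset.sum_sub_distrib, ← hp]
      rw [show ∑ i, (t * w' i) • y i = t • ∑ i, w' i • y i by
        rw [Finset.smul_sum]; exact Finset.sum_congr rfl fun i _ => by rw [mul_smul]]
      rw [hw'0, smul_zero, sub_zero]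
    · show l0 i0 - t * w' i0 = 0
      rw [htdef, div_mul_cancel₀ _ (ne_of_gt hwi0), sub_self]
  obtain ⟨l1, hl1K, hl1p, i0, hl1i0⟩ := stepA
  -- Step B: pick a good replacement color at i0
  obtain ⟨μ, hμ0, hμ1, hμs⟩ := h0 i0
  have hj : ∃ j, ⟪p, u i0 j⟫ ≤ 0 := by
    by_contra hcon
    push_neg at hcon
    have h1 : ⟪p, ∑ j, μ j • u i0 j⟫ = (0:ℝ) := by rw [hμs, inner_zero_right]
    rw [inner_sum] at h1
    have h2 : 0 < ∑ j, μ j * ⟪p, u i0 j⟫ := by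
      have hex : ∃ j ∈ univ, 0 < μ j := by
        by_contra hno
        push_neg at hno
        have : ∑ j, μ j = 0 := Finset.sum_eq_zero fun j hj =>
          le_antisymm (hno j hj) (hμ0 j)
        rw [hμ1] at this; norm_num at this
      obtain ⟨j1, _, hj1⟩ := hex
      refine Finset.sum_pos' (fun j _ => mul_nonneg (hμ0 j) (hcon j).le) ⟨j1, mem_univ j1, ?_⟩
      exact mul_pos hj1 (hcon j1)
    simp only [real_inner_smul_right] at h1
    linarith
  obtain ⟨j, hju⟩ := hj
  set c1 := Function.update c₀ i0 j with hc1
  have hS1 : ∑ i, l1 i • u i (c1 i) = p := by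
    rw [← hl1p]
    refine Finset.sum_congr rfl fun i _ => ?_
    by_cases hii : i = i0
    · subst hii
      rw [hl1i0]; simp
    · rw [hc1, Function.update_of_ne hii]
  -- final contradiction
  set z := u i0 j - p with hz
  set a := ⟪z, z⟫ with ha
  have ha0 : 0 ≤ a := real_inner_self_nonneg
  have hb : ⟪p, z⟫ ≤ -⟪p, p⟫ := by
    rw [hz, inner_sub_right]; linarith
  set t := ⟪p, p⟫ / (a + ⟪p, p⟫) with htdef
  have hden : 0 < a + ⟪p, p⟫ := by linarith
  have ht0 : 0 < t := div_pos hm hden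
  have ht1 : t ≤ 1 := by
    rw [htdef, div_le_one hden]; linarith
  have hmem := move_vertex_mem hl1K i0 ht0.le ht1
  have hsum := move_vertex (fun i => u i (c1 i)) l1 i0 t
  have hkey := hglob2 c1 _ hmem
  rw [hsum, hS1] at hkey
  have hci0 : c1 i0 = j := Function.update_self i0 j c₀
  rw [hci0] at hkey
  have hrw : (1 - t) • p + t • u i0 j = p + t • z := by
    rw [hz, sub_smul, one_smul, smul_sub]; abel
  rw [hrw, inner_expand] at hkey
  have hta : t * (a + ⟪p, p⟫) = ⟪p, p⟫ := by
    rw [htdef]; field_simp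
  nlinarith [hkey, mul_pos ht0 hm, sq_nonneg t, mul_le_mul_of_nonneg_left hb (le_of_lt ht0)]


private def tvV (r r1 : ℕ) (j : Fin r) (k : Fin r1) : ℝ :=
  (if (j : ℕ) = (k : ℕ) then 1 else 0) - (if (j : ℕ) = r1 then 1 else 0)

private def tvX (d N : ℕ) (x : Fin N → EuclideanSpace ℝ (Fin d)) (i : Fin N)
    (o : Option (Fin d)) : ℝ :=
  o.elim 1 (fun m => x i m)

private def tvU (d N r r1 : ℕ) (x : Fin N → EuclideanSpace ℝ (Fin d)) (i : Fin N) (j : Fin r) :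
    EuclideanSpace ℝ (Fin r1 × Option (Fin d)) :=
  WithLp.toLp 2 (fun q => tvV r r1 j q.1 * tvX d N x i q.2)



/-- **Classical Tverberg theorem.** -/
theorem tverberg (d r : ℕ) (hd : 1 ≤ d) (hr : 2 ≤ r)
    (N : ℕ) (hN : N = (d+1)*(r-1)+1)
    (x : Fin N → EuclideanSpace ℝ (Fin d))
    (hgen : ∀ s : Finset (Fin N), s.card ≤ d+1 →
      AffineIndependent ℝ (fun i : s => x i.1)) :
    ∃ F : Fin r → Finset (Fin N),
      (∀ i j, i ≠ j → Disjoint (F i) (F j)) ∧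
      (Finset.univ.biUnion F = Finset.univ) ∧
      (⋂ i, convexHull ℝ (x '' (F i))).Nonempty := by
  classical
  have hrpos : 0 < r := by omega
  set r1 := r - 1 with hr1def
  have hr1 : 1 ≤ r1 := by omega
  have hlast : r1 < r := by omega
  have hW : Module.finrank ℝ (EuclideanSpace ℝ (Fin r1 × Option (Fin d))) + 1 = N := by
    rw [finrank_euclideanSpace, Fintype.card_prod, Fintype.card_fin, Fintype.card_option,
      Fintype.card_fin, hN, Nat.mul_comm]
  haveI : Nonempty (Fin r) := ⟨⟨0, hrpos⟩⟩
  have hv0 : ∀ k : Fin r1, ∑ j : Fin r, tvV r r1 j k = 0 := by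
    intro k
    have hk : (k : ℕ) < r := by omega
    simp only [tvV]
    rw [Finset.sum_sub_distrib]
    have e1 : (∑ j : Fin r, if (j : ℕ) = (k : ℕ) then (1:ℝ) else 0) = 1 := by
      have h1 : ∀ j : Fin r, (if (j : ℕ) = (k : ℕ) then (1:ℝ) else 0)
          = if j = ⟨(k : ℕ), hk⟩ then 1 else 0 := by
        intro j
        by_cases h : j = ⟨(k : ℕ), hk⟩
        · rw [if_pos (by rw [h]), if_pos h]
        · rw [if_neg (fun hh => h (Fin.ext hh)), if_neg h]
      rw [Finset.sum_congr rfl (fun j _ => h1 j)]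
      rw [Finset.sum_ite_eq' Finset.univ (⟨(k : ℕ), hk⟩ : Fin r) (fun _ => (1:ℝ))]
      simp
    have e2 : (∑ j : Fin r, if (j : ℕ) = r1 then (1:ℝ) else 0) = 1 := by
      have h1 : ∀ j : Fin r, (if (j : ℕ) = r1 then (1:ℝ) else 0)
          = if j = ⟨r1, hlast⟩ then 1 else 0 := by
        intro j
        by_cases h : j = ⟨r1, hlast⟩
        · rw [if_pos (by rw [h]), if_pos h]
        · rw [if_neg (fun hh => h (Fin.ext hh)), if_neg h]
      rw [Finset.sum_congr rfl (fun j _ => h1 j)]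
      rw [Finset.sum_ite_eq' Finset.univ (⟨r1, hlast⟩ : Fin r) (fun _ => (1:ℝ))]
      simp
    rw [e1, e2, sub_self]
  have h0 : ∀ i : Fin N, ∃ μ : Fin r → ℝ, (∀ j, 0 ≤ μ j) ∧ ∑ j, μ j = 1 ∧
      ∑ j, μ j • tvU d N r r1 x i j = 0 := by
    intro i
    refine ⟨fun _ => (r : ℝ)⁻¹, fun _ => by positivity, ?_, ?_⟩
    · rw [Finset.sum_const, Finset.card_univ, Fintype.card_fin, nsmul_eq_mul]
      field_simp
    · ext q
      rw [WithLp.ofLp_sum, Finset.sum_apply]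
      rw [Finset.sum_congr rfl (fun j _ =>
        show ((r:ℝ)⁻¹ • tvU d N r r1 x i j) q
          = tvV r r1 j q.1 * ((r:ℝ)⁻¹ * tvX d N x i q.2) from by
        show (r:ℝ)⁻¹ * (tvV r r1 j q.1 * tvX d N x i q.2) = _
        ring)]
      rw [← Finset.sum_mul, hv0 q.1, zero_mul]
      rfl
  obtain ⟨c, l, hl0, hl1, hls⟩ := colorful_caratheodory hW (tvU d N r r1 x) h0
  refine ⟨fun k => Finset.univ.filter (fun i => c i = k), ?_, ?_, ?_⟩
  · intro k k' hkk
    rw [Finset.disjoint_left]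
    intro i hi hi'
    simp only [Finset.mem_filter, Finset.mem_univ, true_and] at hi hi'
    exact hkk (hi ▸ hi')
  · ext i
    simp only [Finset.mem_biUnion, Finset.mem_univ, Finset.mem_filter, true_and, iff_true]
    exact ⟨c i, rfl⟩
  · -- the common point
    have hcoord : ∀ q : Fin r1 × Option (Fin d),
        ∑ i, l i * (tvV r r1 (c i) q.1 * tvX d N x i q.2) = 0 := by
      intro q
      have h1 : (∑ i, l i • tvU d N r r1 x i (c i)) q = 0 := by rw [hls]; rfl
      rw [WithLp.ofLp_sum, Finset.sum_apply] at h1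
      rw [Finset.sum_congr rfl (fun i _ =>
        show (l i • tvU d N r r1 x i (c i)) q
          = l i * (tvV r r1 (c i) q.1 * tvX d N x i q.2) from rfl)] at h1
      exact h1
    have key : ∀ (j : Fin r) (o : Option (Fin d)),
        ∑ i ∈ Finset.univ.filter (fun i' => c i' = j), l i * tvX d N x i o
          = ∑ i ∈ Finset.univ.filter (fun i' => c i' = ⟨r1, hlast⟩), l i * tvX d N x i o := by
      intro j o
      by_cases hjl : j = ⟨r1, hlast⟩
      · rw [hjl]
      · have hjne : (j : ℕ) ≠ r1 := fun h => hjl ((Fin.val_eq_val _ _).1 h)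
        have hjr1 : (j : ℕ) < r1 := by have := j.2; omega
        have hq := hcoord (⟨(j : ℕ), hjr1⟩, o)
        have hterm : ∀ i, l i * (tvV r r1 (c i) ⟨(j : ℕ), hjr1⟩ * tvX d N x i o)
            = (if c i = j then l i * tvX d N x i o else 0)
              - (if c i = ⟨r1, hlast⟩ then l i * tvX d N x i o else 0) := by
          intro i
          show l i * (((if ((c i : ℕ)) = ((j : ℕ)) then (1:ℝ) else 0)
            - (if ((c i : ℕ)) = r1 then 1 else 0)) * tvX d N x i o) = _
          rw [if_congr (Fin.val_eq_val (c i) j) rfl rfl,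
            if_congr (Fin.val_eq_val (c i) ⟨r1, hlast⟩) rfl rfl]
          split_ifs <;> ring
        rw [Finset.sum_congr rfl (fun i _ => hterm i)] at hq
        rw [Finset.sum_sub_distrib] at hq
        rw [Finset.sum_filter, Finset.sum_filter]
        linarith
    have hs : ∀ j : Fin r, ∑ i ∈ Finset.univ.filter (fun i' => c i' = j), l i
        = ∑ i ∈ Finset.univ.filter (fun i' => c i' = ⟨r1, hlast⟩), l i := by
      intro j
      have := key j none
      simpa only [show ∀ i, tvX d N x i none = 1 from fun _ => rfl, mul_one] using this
    have hsum_all : ∑ j : Fin r, ∑ i ∈ Finset.univ.filter (fun i' => c i' = j), l i = 1 := by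
      rw [Finset.sum_congr rfl (fun j _ => Finset.sum_filter _ _), Finset.sum_comm]
      rw [Finset.sum_congr rfl (fun i _ => ?_)]
      · exact hl1
      · rw [Finset.sum_congr rfl (fun j _ => by
          rw [if_congr (eq_comm : (c i = j) ↔ (j = c i)) rfl rfl])]
        rw [Finset.sum_ite_eq' Finset.univ (c i) (fun _ => l i)]
        simp
    have hs0 : ∑ i ∈ Finset.univ.filter (fun i' => c i' = ⟨r1, hlast⟩), l i = (r : ℝ)⁻¹ := by
      have h2 : ∑ j : Fin r, ∑ i ∈ Finset.univ.filter (fun i' => c i' = j), l i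
          = (r : ℝ) * ∑ i ∈ Finset.univ.filter (fun i' => c i' = ⟨r1, hlast⟩), l i := by
        rw [Finset.sum_congr rfl (fun j _ => hs j), Finset.sum_const, Finset.card_univ,
          Fintype.card_fin, nsmul_eq_mul]
      rw [hsum_all] at h2
      field_simp at h2 ⊢
      linarith
    have hrinv : (0:ℝ) < (r : ℝ)⁻¹ := by positivity
    have hz : ∀ j : Fin r, (Finset.univ.filter (fun i' => c i' = j)).centerMass l x
        = (Finset.univ.filter (fun i' => c i' = ⟨r1, hlast⟩)).centerMass l x := by
      intro j
      rw [Finset.centerMass, Finset.centerMass, hs j]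
      congr 1
      have e : ∀ (t : Finset (Fin N)) (m : Fin d),
          (∑ i ∈ t, l i • x i) m = ∑ i ∈ t, l i * tvX d N x i (some m) := by
        intro t m
        rw [WithLp.ofLp_sum, Finset.sum_apply]
        exact Finset.sum_congr rfl fun i _ => rfl
      ext m
      rw [e, e, key j (some m)]
    refine ⟨(Finset.univ.filter (fun i' => c i' = ⟨r1, hlast⟩)).centerMass l x,
      Set.mem_iInter.2 fun k => ?_⟩
    have hpos : 0 < ∑ i ∈ Finset.univ.filter (fun i' => c i' = k), l i := by
      rw [hs k, hs0]; exact hrinv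
    rw [← hz k]
    exact Finset.centerMass_mem_convexHull _ (fun i _ => hl0 i) hpos
      (fun i hi => Set.mem_image_of_mem x (Finset.mem_coe.2 hi))
end

section
/- Let d ≥ 1, r ≥ 3, and N = (d+1)(r−1). Suppose that BMZ(d+1, r, ℝ^{d+1}) holds for every special coloring of Δ_{N'}, N' = (d+2)(r−1). Then BMZ(d, r, ℝ^d) holds for every coloring C_0, C_1, …, C_{d+1}, C_{d+2} of Δ_N with |C_0| = r−2, |C_i| = r−1 for 1 ≤ i ≤ d, and |C_{d+1}| = |C_{d+2}| = 1. -/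
/-- The face of the standard `N`-simplex spanned by the set `S` of vertices:
points whose barycentric coordinates vanish outside `S`. -/
def simplexFace (N : ℕ) (S : Finset (Fin (N+1))) : Set (stdSimplex ℝ (Fin (N+1))) :=
  {x | ∀ i, i ∉ S → (x : Fin (N+1) → ℝ) i = 0}

/-- `BMZ r C Y` : for every continuous map `f : Δ_N → Y` there are `r` pairwise
disjoint rainbow faces (for the coloring `C`) of `Δ_N` whose `f`-images have a
common point. -/
def BMZ {N m : ℕ} (r : ℕ) (C : Fin m → Finset (Fin (N+1)))
    (Y : Type*) [TopologicalSpace Y] : Prop :=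
  ∀ f : stdSimplex ℝ (Fin (N+1)) → Y, Continuous f →
    ∃ σ : Fin r → Finset (Fin (N+1)),
      (∀ i j, (σ i ∩ C j).card ≤ 1) ∧
      (∀ i j, i ≠ j → Disjoint (σ i) (σ j)) ∧
      (⋂ i, f '' simplexFace N (σ i)).Nonempty

/-- `C` is a coloring of the vertices of `Δ_N`: the classes are pairwise
disjoint and cover all the vertices. -/
def IsColoring {N m : ℕ} (C : Fin m → Finset (Fin (N+1))) : Prop :=
  (∀ i j, i ≠ j → Disjoint (C i) (C j)) ∧ Finset.univ.biUnion C = Finset.univ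

/-- A special coloring of `Δ_N` for the parameters `(d, r)`:
`d+2` classes `C_0, …, C_{d+1}` with `|C_i| = r-1` for `0 ≤ i ≤ d` and
`|C_{d+1}| = 1`. -/
def IsSpecialColoring (d r N : ℕ) (C : Fin (d+2) → Finset (Fin (N+1))) : Prop :=
  IsColoring C ∧ (∀ i : Fin (d+2), (i : ℕ) ≤ d → (C i).card = r - 1) ∧
    (C ⟨d+1, by omega⟩).card = 1

namespace BMZRed

variable (d r N : ℕ)

/-- the embedding of old vertices into the extended simplex -/
def emb : Fin (N+1) ↪ Fin (N+(r-1)+1) := Fin.castLEEmb (by omega)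

@[simp] lemma emb_val (j : Fin (N+1)) : ((emb r N j : Fin (N+(r-1)+1)) : ℕ) = (j : ℕ) := rfl

/-- the new vertices except the last one -/
def bigNew : Finset (Fin (N+(r-1)+1)) :=
  (Finset.Ico (N+1) (N+(r-1))).attachFin (fun m hm => by
    simp only [Finset.mem_Ico] at hm; omega)

lemma mem_bigNew {v : Fin (N+(r-1)+1)} :
    v ∈ bigNew r N ↔ N+1 ≤ (v:ℕ) ∧ (v:ℕ) < N+(r-1) := by
  simp [bigNew, Finset.mem_attachFin, Finset.mem_Ico]

lemma card_bigNew (hr : 3 ≤ r) : (bigNew r N).card = r - 2 := by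
  rw [bigNew, Finset.card_attachFin, Nat.card_Ico]; omega

variable (C : Fin (d+3) → Finset (Fin (N+1)))

/-- old part of the extended coloring -/
def A : Fin (d+3) → Finset (Fin (N+1)) :=
  fun j => if (j:ℕ) = 0 then C 0 ∪ C ⟨d+2, by omega⟩
    else if (j:ℕ) = d+2 then ∅ else C j

/-- new part of the extended coloring -/
def B : Fin (d+3) → Finset (Fin (N+(r-1)+1)) :=
  fun j => if (j:ℕ) = d+1 then bigNew r N
    else if (j:ℕ) = d+2 then {⟨N+(r-1), by omega⟩} else ∅

/-- extended coloring -/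
def CExt : Fin (d+3) → Finset (Fin (N+(r-1)+1)) :=
  fun j => (A d N C j).map (emb r N) ∪ B d r N j

lemma B_val_ge (hr : 3 ≤ r) {j : Fin (d+3)} {v : Fin (N+(r-1)+1)}
    (h : v ∈ B d r N j) : N+1 ≤ (v:ℕ) := by
  unfold B at h
  split_ifs at h with h1 h2
  · exact ((mem_bigNew r N).mp h).1
  · simp only [Finset.mem_singleton] at h; subst h; simp; omega
  · simp at h

lemma mapA_val_le {j : Fin (d+3)} {v : Fin (N+(r-1)+1)}
    (h : v ∈ (A d N C j).map (emb r N)) : (v:ℕ) ≤ N := by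
  obtain ⟨w, _, rfl⟩ := Finset.mem_map.mp h
  simp only [emb_val]; omega

/-- where old color j goes in the extended coloring -/
def g (j : Fin (d+3)) : Fin (d+3) := if (j:ℕ) = d+2 then 0 else j

lemma mem_A_g {w : Fin (N+1)} {j : Fin (d+3)} (hw : w ∈ C j) :
    w ∈ A d N C (g d j) := by
  unfold A g
  by_cases h2 : (j:ℕ) = d+2
  · have hj : j = ⟨d+2, by omega⟩ := Fin.ext h2
    simp only [if_pos h2, Fin.val_zero, if_pos rfl, if_true, Finset.mem_union]
    right; rwa [hj] at hw
  · rw [if_neg h2]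
    by_cases h0 : (j:ℕ) = 0
    · have hj : j = 0 := Fin.ext (by simp [h0])
      simp only [h0, if_pos rfl, if_true, Finset.mem_union]
      left; rwa [hj] at hw
    · rw [if_neg h0, if_neg h2]; exact hw

end BMZRed

namespace BMZRed

variable (d r N : ℕ) (C : Fin (d+3) → Finset (Fin (N+1)))


lemma A_zero {j : Fin (d+3)} (h : (j:ℕ) = 0) :
    A d N C j = C 0 ∪ C ⟨d+2, by omega⟩ := by rw [A, if_pos h]

lemma A_last {j : Fin (d+3)} (h : (j:ℕ) = d+2) :
    A d N C j = ∅ := by rw [A, if_neg (by omega), if_pos h]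

lemma A_self {j : Fin (d+3)} (h0 : (j:ℕ) ≠ 0) (h2 : (j:ℕ) ≠ d+2) :
    A d N C j = C j := by rw [A, if_neg h0, if_neg h2]

lemma B_mid {j : Fin (d+3)} (h : (j:ℕ) = d+1) :
    B d r N j = bigNew r N := by rw [B, if_pos h]

lemma B_last {j : Fin (d+3)} (h : (j:ℕ) = d+2) :
    B d r N j = {⟨N+(r-1), by omega⟩} := by rw [B, if_neg (by omega), if_pos h]

lemma B_empty {j : Fin (d+3)} (h1 : (j:ℕ) ≠ d+1) (h2 : (j:ℕ) ≠ d+2) :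
    B d r N j = ∅ := by rw [B, if_neg h1, if_neg h2]

lemma A_disjoint (hC : IsColoring C) {j j' : Fin (d+3)} (h : j ≠ j') :
    Disjoint (A d N C j) (A d N C j') := by
  have hdis := hC.1
  have hne : (j:ℕ) ≠ (j':ℕ) := fun h' => h (Fin.ext h')
  have key : ∀ k : Fin (d+3), (k:ℕ) ≠ 0 → (k:ℕ) ≠ d+2 →
      Disjoint (C 0 ∪ C ⟨d+2, by omega⟩) (C k) := by
    intro k hk0 hk2
    rw [Finset.disjoint_union_left]
    exact ⟨hdis 0 k (fun hh => hk0 (by rw [← hh]; simp)),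
      hdis ⟨d+2, by omega⟩ k (fun hh => hk2 (by rw [← hh]))⟩
  by_cases hj0 : (j:ℕ) = 0
  · rw [A_zero d N C hj0]
    by_cases hj'2 : (j':ℕ) = d+2
    · rw [A_last d N C hj'2]; exact Finset.disjoint_empty_right _
    · rw [A_self d N C (by omega) hj'2]; exact key j' (by omega) hj'2
  · by_cases hj2 : (j:ℕ) = d+2
    · rw [A_last d N C hj2]; exact Finset.disjoint_empty_left _
    · rw [A_self d N C hj0 hj2]
      by_cases hj'0 : (j':ℕ) = 0
      · rw [A_zero d N C hj'0]; exact (key j hj0 hj2).symm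
      · by_cases hj'2 : (j':ℕ) = d+2
        · rw [A_last d N C hj'2]; exact Finset.disjoint_empty_right _
        · rw [A_self d N C hj'0 hj'2]; exact hdis j j' h

lemma B_disjoint (hr : 3 ≤ r) {j j' : Fin (d+3)} (h : j ≠ j') :
    Disjoint (B d r N j) (B d r N j') := by
  have hne : (j:ℕ) ≠ (j':ℕ) := fun h' => h (Fin.ext h')
  have key : Disjoint (bigNew r N) ({⟨N+(r-1), by omega⟩} : Finset (Fin (N+(r-1)+1))) := by
    rw [Finset.disjoint_left]
    intro v hv hv'
    have h1 := (mem_bigNew r N).mp hv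
    simp only [Finset.mem_singleton] at hv'
    subst hv'
    simp at h1
  by_cases hj1 : (j:ℕ) = d+1
  · rw [B_mid d r N hj1]
    by_cases hj'2 : (j':ℕ) = d+2
    · rw [B_last d r N hj'2]; exact key
    · rw [B_empty d r N (by omega) hj'2]; exact Finset.disjoint_empty_right _
  · by_cases hj2 : (j:ℕ) = d+2
    · rw [B_last d r N hj2]
      by_cases hj'1 : (j':ℕ) = d+1
      · rw [B_mid d r N hj'1]; exact key.symm
      · rw [B_empty d r N hj'1 (by omega)]; exact Finset.disjoint_empty_right _
    · rw [B_empty d r N hj1 hj2]; exact Finset.disjoint_empty_left _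

lemma CExt_disjoint (hr : 3 ≤ r) (hC : IsColoring C)
    {j j' : Fin (d+3)} (h : j ≠ j') :
    Disjoint (CExt d r N C j) (CExt d r N C j') := by
  rw [Finset.disjoint_left]
  intro v hv hv'
  unfold CExt at hv hv'
  rcases Finset.mem_union.mp hv with hL | hR <;>
    rcases Finset.mem_union.mp hv' with hL' | hR'
  · obtain ⟨w, hw, rfl⟩ := Finset.mem_map.mp hL
    obtain ⟨w', hw', he⟩ := Finset.mem_map.mp hL'
    have : w' = w := (emb r N).injective he
    subst this
    exact Finset.disjoint_left.mp (A_disjoint d N C hC h) hw hw'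
  · have := mapA_val_le d r N C hL
    have := B_val_ge d r N hr hR'
    omega
  · have := mapA_val_le d r N C hL'
    have := B_val_ge d r N hr hR
    omega
  · exact Finset.disjoint_left.mp (B_disjoint d r N hr h) hR hR'

lemma CExt_cover (hr : 3 ≤ r) (hC : IsColoring C) :
    Finset.univ.biUnion (CExt d r N C) = Finset.univ := by
  rw [Finset.eq_univ_iff_forall]
  intro v
  rw [Finset.mem_biUnion]
  by_cases hv : (v:ℕ) ≤ N
  · set w : Fin (N+1) := ⟨(v:ℕ), by omega⟩ with hw
    have : w ∈ Finset.univ.biUnion C := by rw [hC.2]; exact Finset.mem_univ _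
    obtain ⟨j, _, hj⟩ := Finset.mem_biUnion.mp this
    refine ⟨g d j, Finset.mem_univ _, ?_⟩
    unfold CExt
    apply Finset.mem_union_left
    rw [Finset.mem_map]
    exact ⟨w, mem_A_g d N C hj, Fin.ext rfl⟩
  · by_cases hv2 : (v:ℕ) < N+(r-1)
    · refine ⟨⟨d+1, by omega⟩, Finset.mem_univ _, ?_⟩
      apply Finset.mem_union_right
      rw [B_mid d r N (by simp)]
      exact (mem_bigNew r N).mpr ⟨by omega, hv2⟩
    · refine ⟨⟨d+2, by omega⟩, Finset.mem_univ _, ?_⟩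
      apply Finset.mem_union_right
      rw [B_last d r N (by simp), Finset.mem_singleton]
      have hlt := v.isLt
      have hveq : (v:ℕ) = N+(r-1) := by omega
      exact Fin.ext hveq

lemma card_CExt (hr : 3 ≤ r) (j : Fin (d+3)) :
    (CExt d r N C j).card = (A d N C j).card + (B d r N j).card := by
  unfold CExt
  rw [Finset.card_union_of_disjoint, Finset.card_map]
  rw [Finset.disjoint_left]
  intro v hv hv'
  have := mapA_val_le d r N C hv
  have := B_val_ge d r N hr hv'
  omega

lemma cext_special (hd : 1 ≤ d) (hr : 3 ≤ r) (hC : IsColoring C)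
    (h0 : (C 0).card = r - 2)
    (hmid : ∀ i : Fin (d+3), 1 ≤ (i : ℕ) → (i : ℕ) ≤ d → (C i).card = r - 1)
    (h1 : (C ⟨d+1, by omega⟩).card = 1) (h2 : (C ⟨d+2, by omega⟩).card = 1) :
    IsSpecialColoring (d+1) r (N+(r-1)) (CExt d r N C) := by
  refine ⟨⟨fun i j hij => CExt_disjoint d r N C hr hC hij,
    CExt_cover d r N C hr hC⟩, ?_, ?_⟩
  · intro i hi
    rw [card_CExt d r N C hr]
    by_cases hi0 : (i:ℕ) = 0
    · rw [A_zero d N C hi0, B_empty d r N (by omega) (by omega)]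
      rw [Finset.card_union_of_disjoint
        (hC.1 0 ⟨d+2, by omega⟩ (fun hh => by
          have hvz : ((0 : Fin (d+3)) : ℕ) = d+2 := by rw [hh]
          simp at hvz))]
      rw [h0, h2]
      simp only [Finset.card_empty]
      omega
    · by_cases hi1 : (i:ℕ) = d+1
      · have hieq : i = ⟨d+1, by omega⟩ := Fin.ext hi1
        rw [A_self d N C hi0 (by omega), B_mid d r N hi1, hieq, h1,
          card_bigNew r N hr]
        omega
      · rw [A_self d N C hi0 (by omega), B_empty d r N hi1 (by omega)]
        rw [hmid i (by omega) (by omega)]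
        simp
  · rw [card_CExt d r N C hr]
    rw [A_last d N C (by simp), B_last d r N (by simp)]
    simp


/-- total mass on the new vertices -/
def tmass (r N : ℕ) (x : stdSimplex ℝ (Fin (N+(r-1)+1))) : ℝ :=
  ∑ k ∈ Finset.univ.filter (fun k : Fin (N+(r-1)+1) => N+1 ≤ (k:ℕ)),
    (x : Fin (N+(r-1)+1) → ℝ) k

lemma tmass_nonneg (r N : ℕ) (x : stdSimplex ℝ (Fin (N+(r-1)+1))) :
    0 ≤ tmass r N x :=
  Finset.sum_nonneg fun k _ => x.2.1 k

lemma tmass_continuous (r N : ℕ) : Continuous (tmass r N) :=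
  continuous_finset_sum _ fun k _ => (continuous_apply k).comp continuous_subtype_val

lemma old_filter_eq (r N : ℕ) :
    (Finset.univ.filter (fun k : Fin (N+(r-1)+1) => ¬ (N+1 ≤ (k:ℕ)))) =
      Finset.univ.map (emb r N) := by
  ext k
  simp only [Finset.mem_filter, Finset.mem_univ, true_and, Finset.mem_map]
  constructor
  · intro h
    exact ⟨⟨(k:ℕ), by omega⟩, Fin.ext rfl⟩
  · rintro ⟨w, _, rfl⟩
    simp only [emb_val]
    omega

lemma sum_old (r N : ℕ) (x : stdSimplex ℝ (Fin (N+(r-1)+1))) :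
    ∑ j : Fin (N+1), (x : Fin (N+(r-1)+1) → ℝ) (emb r N j) + tmass r N x = 1 := by
  have := Finset.sum_filter_add_sum_filter_not Finset.univ
    (fun k : Fin (N+(r-1)+1) => ¬ (N+1 ≤ (k:ℕ))) (x : Fin (N+(r-1)+1) → ℝ)
  rw [old_filter_eq r N, Finset.sum_map] at this
  have hsum := x.2.2
  unfold tmass
  have hfilter : (Finset.univ.filter (fun k : Fin (N+(r-1)+1) => ¬¬(N+1 ≤ (k:ℕ)))) =
      (Finset.univ.filter (fun k : Fin (N+(r-1)+1) => N+1 ≤ (k:ℕ))) := by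
    apply Finset.filter_congr; intro k _; simp
  rw [hfilter] at this
  rw [this]
  exact hsum

/-- projection of the big simplex onto the small one, dumping the new mass
onto vertex 0 -/
def proj (r N : ℕ) (x : stdSimplex ℝ (Fin (N+(r-1)+1))) : stdSimplex ℝ (Fin (N+1)) :=
  ⟨fun j => (x : Fin (N+(r-1)+1) → ℝ) (emb r N j) + (if j = 0 then tmass r N x else 0),
   by
    constructor
    · intro j
      apply add_nonneg (x.2.1 _)
      split_ifs
      · exact tmass_nonneg r N x
      · exact le_rfl
    · simp only [Finset.sum_add_distrib, Finset.sum_ite_eq' Finset.univ (0 : Fin (N+1)),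
        Finset.mem_univ, if_true]
      exact sum_old r N x⟩

lemma proj_continuous (r N : ℕ) : Continuous (proj r N) := by
  apply Continuous.subtype_mk
  apply continuous_pi
  intro j
  apply Continuous.add
  · exact (continuous_apply (emb r N j)).comp continuous_subtype_val
  · by_cases h : j = 0
    · simpa [h] using tmass_continuous r N
    · simp [h]
      exact continuous_const

lemma proj_coord (r N : ℕ) (x : stdSimplex ℝ (Fin (N+(r-1)+1)))
    (ht : tmass r N x = 0) (j : Fin (N+1)) :
    (proj r N x : Fin (N+1) → ℝ) j = (x : Fin (N+(r-1)+1) → ℝ) (emb r N j) := by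
  show (x : Fin (N+(r-1)+1) → ℝ) (emb r N j) + (if j = 0 then tmass r N x else 0) = _
  rw [ht]
  simp

end BMZRed


open BMZRed in
/-- **Proposition 2.1**: moving one vertex of `C_0` into a new singleton class. -/
theorem reduction_prop_one_singleton (d r : ℕ) (hd : 1 ≤ d) (hr : 3 ≤ r)
    (N : ℕ) (hN : N = (d+1)*(r-1))
    (hyp : ∀ C' : Fin (d+3) → Finset (Fin ((d+2)*(r-1)+1)),
      IsSpecialColoring (d+1) r ((d+2)*(r-1)) C' →
      BMZ r C' (EuclideanSpace ℝ (Fin (d+1)))) :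
    ∀ C : Fin (d+3) → Finset (Fin (N+1)),
      IsColoring C →
      (C 0).card = r - 2 →
      (∀ i : Fin (d+3), 1 ≤ (i : ℕ) → (i : ℕ) ≤ d → (C i).card = r - 1) →
      (C ⟨d+1, by omega⟩).card = 1 →
      (C ⟨d+2, by omega⟩).card = 1 →
      BMZ r C (EuclideanSpace ℝ (Fin d)) := by
  intro C hC h0 hmid h1 h2
  have key : (d+2)*(r-1) = N + (r-1) := by rw [hN]; ring
  rw [key] at hyp
  have hbmz := hyp (CExt d r N C)
    (cext_special d r N C hd hr hC h0 hmid h1 h2)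
  intro f hf
  -- extended map
  set F : stdSimplex ℝ (Fin (N+(r-1)+1)) → EuclideanSpace ℝ (Fin (d+1)) :=
    fun x => (WithLp.equiv 2 (Fin (d+1) → ℝ)).symm
      (fun i => if h : (i:ℕ) < d then f (proj r N x) ⟨(i:ℕ), h⟩ else tmass r N x)
    with hF
  have hFc : Continuous F := by
    apply (PiLp.continuous_toLp 2 (fun _ : Fin (d+1) => ℝ)).comp
    apply continuous_pi
    intro i
    by_cases h : (i:ℕ) < d
    · simp only [dif_pos h]
      exact ((continuous_apply (⟨(i:ℕ), h⟩ : Fin d)).comp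
        ((PiLp.continuous_ofLp 2 (fun _ : Fin d => ℝ)).comp
          (hf.comp (proj_continuous r N))))
    · simp only [dif_neg h]
      exact tmass_continuous r N
  have hFlast : ∀ x, F x ⟨d, by omega⟩ = tmass r N x := by
    intro x
    show (WithLp.equiv 2 (Fin (d+1) → ℝ)).symm _ _ = _
    rw [WithLp.equiv_symm_apply, PiLp.toLp_apply]
    exact dif_neg (lt_irrefl d)
  have hFcoord : ∀ x (j : Fin d), F x ⟨(j:ℕ), by omega⟩ = f (proj r N x) j := by
    intro x j
    show (WithLp.equiv 2 (Fin (d+1) → ℝ)).symm _ _ = _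
    rw [WithLp.equiv_symm_apply, PiLp.toLp_apply]
    exact dif_pos j.isLt
  obtain ⟨σ', hrb, hdisj, ⟨p, hp⟩⟩ := hbmz F hFc
  rw [Set.mem_iInter] at hp
  -- one face avoids all new vertices
  have hex : ∃ k : Fin r, ∀ v ∈ σ' k, (v:ℕ) ≤ N := by
    by_contra hcon
    push_neg at hcon
    choose v hv hv' using hcon
    have hinj : Function.Injective v := by
      intro a b hab
      by_contra hne
      exact (Finset.disjoint_left.mp (hdisj a b hne) (hv a)) (hab ▸ hv b)
    have hcard : Fintype.card (Fin r) ≤ Fintype.card (Fin (r-1)) := by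
      apply Fintype.card_le_of_injective
        (fun k => (⟨(v k : ℕ) - (N+1), by have := (v k).isLt; have := hv' k; omega⟩ :
          Fin (r-1)))
      intro a b hab
      apply hinj
      have h1 := hv' a
      have h2 := hv' b
      have hval : (v a : ℕ) - (N+1) = (v b : ℕ) - (N+1) := congrArg Fin.val hab
      exact Fin.ext (by omega)
    simp only [Fintype.card_fin] at hcard
    omega
  obtain ⟨k0, hk0⟩ := hex
  -- the common point has last coordinate 0
  have hpd : p ⟨d, by omega⟩ = 0 := by
    obtain ⟨x, hx, hfx⟩ := hp k0
    simp only [simplexFace, Set.mem_setOf_eq] at hx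
    have ht : tmass r N x = 0 := by
      apply Finset.sum_eq_zero
      intro k hk
      simp only [Finset.mem_filter, Finset.mem_univ, true_and] at hk
      exact hx k (fun hmem => by have := hk0 k hmem; omega)
    have h1 : F x ⟨d, by omega⟩ = p ⟨d, by omega⟩ :=
      congrArg (fun q : EuclideanSpace ℝ (Fin (d+1)) => q ⟨d, by omega⟩) hfx
    rw [← h1, hFlast x, ht]
  choose x hxmem hxeq using hp
  simp only [simplexFace, Set.mem_setOf_eq] at hxmem
  -- each witness has zero mass on new vertices
  have ht : ∀ i, tmass r N (x i) = 0 := by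
    intro i
    have h1 : F (x i) ⟨d, by omega⟩ = p ⟨d, by omega⟩ :=
      congrArg (fun q : EuclideanSpace ℝ (Fin (d+1)) => q ⟨d, by omega⟩) (hxeq i)
    rw [hFlast (x i)] at h1
    rw [h1, hpd]
  have hnewzero : ∀ i (k : Fin (N+(r-1)+1)), N+1 ≤ (k:ℕ) →
      ((x i : stdSimplex ℝ (Fin (N+(r-1)+1))) : Fin (N+(r-1)+1) → ℝ) k = 0 := by
    intro i k hk
    have := (Finset.sum_eq_zero_iff_of_nonneg
      (fun j _ => (x i).2.1 j)).mp (ht i) k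
    exact this (Finset.mem_filter.mpr ⟨Finset.mem_univ _, hk⟩)
  -- the pulled-back faces
  set σ : Fin r → Finset (Fin (N+1)) :=
    fun i => Finset.univ.filter (fun j => emb r N j ∈ σ' i) with hσ
  refine ⟨σ, ?_, ?_, ?_⟩
  · -- rainbow
    intro i j
    calc (σ i ∩ C j).card ≤ (σ' i ∩ CExt d r N C (g d j)).card := by
          apply Finset.card_le_card_of_injOn (emb r N)
          · intro w hw
            rw [Finset.mem_coe, Finset.mem_inter] at hw ⊢
            refine ⟨(Finset.mem_filter.mp hw.1).2, ?_⟩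
            apply Finset.mem_union_left
            rw [Finset.mem_map]
            exact ⟨w, mem_A_g d N C hw.2, rfl⟩
          · exact Function.Injective.injOn (emb r N).injective
      _ ≤ 1 := hrb i (g d j)
  · -- disjoint
    intro i j hij
    rw [Finset.disjoint_left]
    intro w hw hw'
    exact Finset.disjoint_left.mp (hdisj i j hij)
      (Finset.mem_filter.mp hw).2 (Finset.mem_filter.mp hw').2
  · -- intersection
    refine ⟨(WithLp.equiv 2 (Fin d → ℝ)).symm (fun j : Fin d => p ⟨(j:ℕ), by omega⟩),
      Set.mem_iInter.mpr fun i => ?_⟩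
    refine ⟨proj r N (x i), ?_, ?_⟩
    · intro j hj
      rw [proj_coord r N (x i) (ht i) j]
      apply hxmem i
      intro hmem
      exact hj (Finset.mem_filter.mpr ⟨Finset.mem_univ _, hmem⟩)
    · ext j
      have h1 : F (x i) ⟨(j:ℕ), by omega⟩ = p ⟨(j:ℕ), by omega⟩ :=
        congrArg (fun q : EuclideanSpace ℝ (Fin (d+1)) => q ⟨(j:ℕ), by omega⟩) (hxeq i)
      rw [hFcoord (x i) j] at h1
      refine h1.trans ?_
      exact (PiLp.toLp_apply (p := 2)
        (x := fun j : Fin d => p ⟨(j:ℕ), by omega⟩) (i := j)).symm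
end

section
/- Let d ≥ 1, r ≥ 4, let q be an integer with 2 ≤ q ≤ r−2, and let N = (d+1)(r−1). Suppose that BMZ(d+1, r, ℝ^{d+1}) holds for every special coloring of Δ_{N'}, N' = (d+2)(r−1). Then BMZ(d, r, ℝ^d) holds for every coloring C_0, C_1, …, C_{d+1}, C_{d+2} of Δ_N with |C_0| = r−1−q, |C_i| = r−1 for 1 ≤ i ≤ d, |C_{d+1}| = 1, and |C_{d+2}| = q. -/
set_option maxHeartbeats 2000000 in
/-- **Proposition 2.2**: moving `q` vertices of `C_0` into one new class of size `q`. -/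
theorem reduction_prop_q_vertices (d r q : ℕ) (hd : 1 ≤ d) (hr : 4 ≤ r)
    (hq1 : 2 ≤ q) (hq2 : q ≤ r - 2)
    (N : ℕ) (hN : N = (d+1)*(r-1))
    (hyp : ∀ C' : Fin (d+3) → Finset (Fin ((d+2)*(r-1)+1)),
      IsSpecialColoring (d+1) r ((d+2)*(r-1)) C' →
      BMZ r C' (EuclideanSpace ℝ (Fin (d+1)))) :
    ∀ C : Fin (d+3) → Finset (Fin (N+1)),
      IsColoring C →
      (C 0).card = r - 1 - q →
      (∀ i : Fin (d+3), 1 ≤ (i : ℕ) → (i : ℕ) ≤ d → (C i).card = r - 1) →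
      (C ⟨d+1, by omega⟩).card = 1 →
      (C ⟨d+2, by omega⟩).card = q →
      BMZ r C (EuclideanSpace ℝ (Fin d)) := by
  have h2 : (d+2)*(r-1) = N + (r-1) := by rw [hN]; ring
  rw [h2] at hyp
  intro C hC hC0 hCi hCd1 hCd2 f hf
  -- the embedding of old vertices
  have hle : N + 1 ≤ N + (r-1) + 1 := by omega
  set emb : Fin (N+1) ↪ Fin (N+(r-1)+1) :=
    ⟨Fin.castLE hle, Fin.castLE_injective hle⟩ with hemb
  have emb_val : ∀ k : Fin (N+1), ((emb k : Fin (N+(r-1)+1)) : ℕ) = (k : ℕ) := fun k => rfl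
  -- old and new vertex sets
  set oldS : Finset (Fin (N+(r-1)+1)) := Finset.map emb Finset.univ with holdS
  have mem_oldS : ∀ v : Fin (N+(r-1)+1), v ∈ oldS ↔ (v : ℕ) < N + 1 := by
    intro v
    constructor
    · rintro hv
      rw [holdS, Finset.mem_map] at hv
      obtain ⟨k, -, rfl⟩ := hv
      exact k.isLt
    · intro hv
      rw [holdS, Finset.mem_map]
      exact ⟨⟨v, hv⟩, Finset.mem_univ _, by apply Fin.ext; rfl⟩
  -- the sets of new vertices for class 0 and class d+1
  set A : Finset (Fin (N+(r-1)+1)) :=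
    (Finset.Ico (N+1) (N+1+q)).attachFin
      (fun m hm => by rw [Finset.mem_Ico] at hm; omega) with hA
  set B : Finset (Fin (N+(r-1)+1)) :=
    (Finset.Ico (N+1+q) (N+(r-1)+1)).attachFin
      (fun m hm => by rw [Finset.mem_Ico] at hm; omega) with hB
  have mem_A : ∀ v : Fin (N+(r-1)+1), v ∈ A ↔ N+1 ≤ (v:ℕ) ∧ (v:ℕ) < N+1+q := by
    intro v
    rw [hA, Finset.mem_attachFin, Finset.mem_Ico]
  have mem_B : ∀ v : Fin (N+(r-1)+1), v ∈ B ↔ N+1+q ≤ (v:ℕ) ∧ (v:ℕ) < N+(r-1)+1 := by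
    intro v
    rw [hB, Finset.mem_attachFin, Finset.mem_Ico]
  have cardA : A.card = q := by rw [hA, Finset.card_attachFin, Nat.card_Ico]; omega
  have cardB : B.card = r-1-q := by rw [hB, Finset.card_attachFin, Nat.card_Ico]; omega
  -- the permutation swapping d+1 and d+2
  set perm : Fin (d+3) → Fin (d+3) := fun i =>
    if (i:ℕ) = d+1 then ⟨d+2, by omega⟩ else if (i:ℕ) = d+2 then ⟨d+1, by omega⟩ else i
    with hperm
  have permval1 : ∀ i : Fin (d+3), (i:ℕ) = d+1 → perm i = ⟨d+2, by omega⟩ := by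
    intro i h
    simp only [hperm]
    rw [if_pos h]
  have permval2 : ∀ i : Fin (d+3), (i:ℕ) = d+2 → perm i = ⟨d+1, by omega⟩ := by
    intro i h
    simp only [hperm]
    rw [if_neg (by omega), if_pos h]
  have permval3 : ∀ i : Fin (d+3), (i:ℕ) ≠ d+1 → (i:ℕ) ≠ d+2 → perm i = i := by
    intro i h1 h2
    simp only [hperm]
    rw [if_neg h1, if_neg h2]
  have perm_invol : ∀ i, perm (perm i) = i := by
    intro i
    by_cases h1 : (i:ℕ) = d+1
    · rw [permval1 i h1, permval2 _ rfl]
      exact Fin.ext (by simp [h1])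
    · by_cases h2 : (i:ℕ) = d+2
      · rw [permval2 i h2, permval1 _ rfl]
        exact Fin.ext (by simp [h2])
      · rw [permval3 i h1 h2, permval3 i h1 h2]
  have perm_inj : Function.Injective perm := by
    intro a b hab
    have := congrArg perm hab
    rwa [perm_invol, perm_invol] at this
  -- the extended coloring
  set C' : Fin (d+3) → Finset (Fin (N+(r-1)+1)) := fun i =>
    ((C (perm i)).map emb) ∪ (if (i:ℕ) = 0 then A else if (i:ℕ) = d+1 then B else ∅)
    with hC'
  have mem_map_lt : ∀ (j : Fin (d+3)) (v : Fin (N+(r-1)+1)),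
      v ∈ (C j).map emb → (v:ℕ) < N+1 := by
    rintro j v hv
    rw [Finset.mem_map] at hv
    obtain ⟨k, -, rfl⟩ := hv
    exact k.isLt
  have extra_disj : ∀ (i : Fin (d+3)) (v : Fin (N+(r-1)+1)),
      v ∈ (if (i:ℕ) = 0 then A else if (i:ℕ) = d+1 then B else ∅) → N+1 ≤ (v:ℕ) := by
    intro i v hv
    split_ifs at hv with h1 h2
    · exact ((mem_A v).1 hv).1
    · have := ((mem_B v).1 hv).1; omega
    · simp at hv
  -- C' is a special coloring
  have hspec : IsSpecialColoring (d+1) r (N+(r-1)) C' := by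
    refine ⟨⟨?_, ?_⟩, ?_, ?_⟩
    · -- pairwise disjoint
      intro i j hij
      rw [Finset.disjoint_left]
      intro v hvi hvj
      rw [hC', Finset.mem_union] at hvi hvj
      rcases hvi with hvi | hvi <;> rcases hvj with hvj | hvj
      · -- both in map parts
        rw [Finset.mem_map] at hvi hvj
        obtain ⟨k, hk, rfl⟩ := hvi
        obtain ⟨k', hk', hkk⟩ := hvj
        have : k' = k := emb.injective hkk
        subst this
        have hne : perm i ≠ perm j := fun h => hij (perm_inj h)
        exact Finset.disjoint_left.1 (hC.1 _ _ hne) hk hk'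
      · exact absurd (mem_map_lt _ _ hvi) (by have := extra_disj j v hvj; omega)
      · exact absurd (mem_map_lt _ _ hvj) (by have := extra_disj i v hvi; omega)
      · -- both in extra parts
        split_ifs at hvi hvj with g1 g2 g3 g4 g5 <;>
          first
          | (exact absurd rfl (by simp at hvi ⊢; omega))
          | (exact hij (Fin.ext (by omega)))
          | (simp at hvi hvj; try (rw [mem_A] at *); try (rw [mem_B] at *); omega)
          | (have h1 := (mem_A v).1 (by assumption); have h2 := (mem_B v).1 (by assumption); omega)
          | simp at hvi
          | simp at hvj
    · -- covering
      apply Finset.eq_univ_of_forall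
      intro v
      rw [Finset.mem_biUnion]
      by_cases hv : (v:ℕ) < N+1
      · obtain ⟨i, -, hi⟩ := Finset.mem_biUnion.1 (hC.2 ▸ Finset.mem_univ (⟨(v:ℕ), hv⟩ : Fin (N+1)))
        refine ⟨perm i, Finset.mem_univ _, ?_⟩
        rw [hC', Finset.mem_union]
        left
        rw [Finset.mem_map]
        exact ⟨⟨(v:ℕ), hv⟩, by rw [perm_invol]; exact hi, Fin.ext rfl⟩
      · by_cases hvq : (v:ℕ) < N+1+q
        · refine ⟨0, Finset.mem_univ _, ?_⟩
          rw [hC', Finset.mem_union]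
          right
          simp only [Fin.val_zero, if_pos rfl]
          exact (mem_A v).2 ⟨by omega, hvq⟩
        · refine ⟨⟨d+1, by omega⟩, Finset.mem_univ _, ?_⟩
          rw [hC', Finset.mem_union]
          right
          have : ¬ (d+1 = 0) := by omega
          simp only [this, if_false, if_pos rfl]
          exact (mem_B v).2 ⟨by omega, v.isLt⟩
    · -- cards of first d+2 classes
      intro i hi
      have hdisj : Disjoint ((C (perm i)).map emb)
          (if (i:ℕ) = 0 then A else if (i:ℕ) = d+1 then B else ∅) := by
        rw [Finset.disjoint_left]
        intro v hv1 hv2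
        have := mem_map_lt _ _ hv1
        have := extra_disj i v hv2
        omega
      rw [hC']
      simp only
      rw [Finset.card_union_of_disjoint hdisj, Finset.card_map]
      by_cases h0 : (i:ℕ) = 0
      · rw [permval3 i (by omega) (by omega), if_pos h0, cardA]
        have : i = 0 := Fin.ext h0
        rw [this, hC0]
        omega
      · by_cases h1 : (i:ℕ) = d+1
        · rw [permval1 i h1, if_neg h0, if_pos h1, cardB, hCd2]
          omega
        · rw [permval3 i h1 (by omega), if_neg h0, if_neg h1, Finset.card_empty, hCi i (by omega) (by omega)]
          omega
    · -- card of last class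
      have h0 : ¬((d+2 : ℕ) = 0) := by omega
      have h1 : ¬((d+2 : ℕ) = d+1) := by omega
      rw [hC']
      simp only [if_neg h0, if_neg h1]
      rw [permval2 _ rfl, Finset.union_empty, Finset.card_map, hCd1]
  -- the total mass on new vertices
  set t : stdSimplex ℝ (Fin (N+(r-1)+1)) → ℝ :=
    fun x => ∑ v ∈ oldSᶜ, (x : Fin (N+(r-1)+1) → ℝ) v with ht
  have ht_nonneg : ∀ x, 0 ≤ t x := fun x => Finset.sum_nonneg fun v _ => x.2.1 v
  have ht_cont : Continuous t := by
    apply continuous_finset_sum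
    intro v _
    exact (continuous_apply v).comp continuous_subtype_val
  -- the retraction onto the old simplex
  have hπmem : ∀ x : stdSimplex ℝ (Fin (N+(r-1)+1)),
      (fun k : Fin (N+1) => (x : Fin (N+(r-1)+1) → ℝ) (emb k) + (if k = 0 then t x else 0))
        ∈ stdSimplex ℝ (Fin (N+1)) := by
    intro x
    constructor
    · intro k
      have h1 := x.2.1 (emb k)
      have h2 := ht_nonneg x
      show (0:ℝ) ≤ (x : Fin (N+(r-1)+1) → ℝ) (emb k) + (if k = 0 then t x else 0)
      split_ifs <;> [exact add_nonneg h1 h2; (rw [add_zero]; exact h1)]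
    · rw [Finset.sum_add_distrib]
      rw [Finset.sum_ite_eq' Finset.univ (0 : Fin (N+1)) (fun _ => t x)]
      rw [if_pos (Finset.mem_univ _)]
      have hsum : ∑ k : Fin (N+1), (x : Fin (N+(r-1)+1) → ℝ) (emb k) =
          ∑ v ∈ oldS, (x : Fin (N+(r-1)+1) → ℝ) v := by
        rw [holdS, Finset.sum_map]
      rw [hsum, ht]
      rw [Finset.sum_add_sum_compl oldS]
      exact x.2.2
  set π : stdSimplex ℝ (Fin (N+(r-1)+1)) → stdSimplex ℝ (Fin (N+1)) :=
    fun x => ⟨_, hπmem x⟩ with hπ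
  have hπcont : Continuous π := by
    apply Continuous.subtype_mk
    apply continuous_pi
    intro k
    apply Continuous.add
    · exact (continuous_apply (emb k)).comp continuous_subtype_val
    · split_ifs
      · exact ht_cont
      · exact continuous_const
  -- the extended map
  set g : stdSimplex ℝ (Fin (N+(r-1)+1)) → (Fin (d+1) → ℝ) :=
    fun x j => if h : (j:ℕ) < d then f (π x) ⟨(j:ℕ), h⟩ else t x with hg
  set f' : stdSimplex ℝ (Fin (N+(r-1)+1)) → EuclideanSpace ℝ (Fin (d+1)) :=
    fun x => (EuclideanSpace.equiv (Fin (d+1)) ℝ).symm (g x) with hf'def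
  have hf'coord : ∀ x j, f' x j = g x j := fun x j => rfl
  have hf'cont : Continuous f' := by
    apply Continuous.comp (EuclideanSpace.equiv (Fin (d+1)) ℝ).symm.continuous
    apply continuous_pi
    intro j
    rw [hg]
    simp only
    split_ifs with h
    · exact ((EuclideanSpace.proj (⟨(j:ℕ), h⟩ : Fin d)).continuous).comp (hf.comp hπcont)
    · exact ht_cont
  -- apply the hypothesis
  obtain ⟨σ', hrain', hdisj', y, hy⟩ := hyp C' hspec f' hf'cont
  -- some face avoids all new vertices
  have hpigeon : ∃ i0 : Fin r, ∀ v ∈ oldSᶜ, v ∉ σ' i0 := by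
    by_contra hcon
    push_neg at hcon
    choose v hv1 hv2 using hcon
    have hinj : Set.InjOn v ↑(Finset.univ : Finset (Fin r)) := by
      intro a _ b _ hab
      by_contra hne
      exact Finset.disjoint_left.1 (hdisj' a b hne) (hv2 a) (hab ▸ hv2 b)
    have hmaps : ∀ a ∈ Finset.univ, v a ∈ oldSᶜ := fun a _ => hv1 a
    have hcard := Finset.card_le_card_of_injOn v hmaps hinj
    have hcard1 : (Finset.univ : Finset (Fin r)).card = r := by simp
    have hcard2 : (oldSᶜ : Finset (Fin (N+(r-1)+1))).card = r - 1 := by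
      rw [Finset.card_compl, holdS, Finset.card_map, Finset.card_univ]
      simp
    omega
  obtain ⟨i0, hi0⟩ := hpigeon
  -- extract witnesses
  have hy' : ∀ i : Fin r, ∃ x ∈ simplexFace (N+(r-1)) (σ' i), f' x = y := by
    intro i
    have := Set.mem_iInter.1 hy i
    obtain ⟨x, hx1, hx2⟩ := this
    exact ⟨x, hx1, hx2⟩
  choose x hxface hxy using hy'
  -- the last coordinate of y is 0
  have hylast : y ⟨d, by omega⟩ = 0 := by
    rw [← hxy i0, hf'coord, hg]
    simp only [lt_self_iff_false, dif_neg, not_false_iff]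
    rw [ht]
    apply Finset.sum_eq_zero
    intro v hv
    exact hxface i0 v (hi0 v hv)
  -- every witness vanishes on new vertices
  have hxnew : ∀ (i : Fin r) (v : Fin (N+(r-1)+1)), v ∈ oldSᶜ →
      ((x i : stdSimplex ℝ (Fin (N+(r-1)+1))) : Fin (N+(r-1)+1) → ℝ) v = 0 := by
    intro i
    have hti : t (x i) = 0 := by
      have : f' (x i) ⟨d, by omega⟩ = y ⟨d, by omega⟩ := by rw [hxy i]
      rw [hf'coord] at this
      rw [hg] at this
      simp only [lt_self_iff_false, dif_neg, not_false_iff] at this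
      rw [this, hylast]
    rw [ht] at hti
    have := (Finset.sum_eq_zero_iff_of_nonneg (fun v _ => (x i).2.1 v)).1 hti
    intro v hv
    exact this v hv
  have htzero : ∀ i : Fin r, t (x i) = 0 := by
    intro i
    rw [ht]
    apply Finset.sum_eq_zero
    intro v hv
    exact hxnew i v hv
  -- the pulled back faces
  set σ : Fin r → Finset (Fin (N+1)) :=
    fun i => Finset.univ.filter (fun k => emb k ∈ σ' i) with hσ
  have mem_σ : ∀ (i : Fin r) (k : Fin (N+1)), k ∈ σ i ↔ emb k ∈ σ' i := by
    intro i k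
    rw [hσ]
    simp
  refine ⟨σ, ?_, ?_, ?_⟩
  · -- rainbow
    intro i j
    have hsub : (σ i ∩ C j).map emb ⊆ σ' i ∩ C' (perm j) := by
      intro v hv
      rw [Finset.mem_map] at hv
      obtain ⟨k, hk, rfl⟩ := hv
      rw [Finset.mem_inter] at hk
      rw [Finset.mem_inter]
      refine ⟨(mem_σ i k).1 hk.1, ?_⟩
      rw [hC', Finset.mem_union]
      left
      rw [Finset.mem_map]
      exact ⟨k, by rw [perm_invol]; exact hk.2, rfl⟩
    calc (σ i ∩ C j).card = ((σ i ∩ C j).map emb).card := (Finset.card_map _).symm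
      _ ≤ (σ' i ∩ C' (perm j)).card := Finset.card_le_card hsub
      _ ≤ 1 := hrain' i (perm j)
  · -- disjointness
    intro i j hij
    rw [Finset.disjoint_left]
    intro k hki hkj
    exact Finset.disjoint_left.1 (hdisj' i j hij) ((mem_σ i k).1 hki) ((mem_σ j k).1 hkj)
  · -- common point
    refine ⟨(EuclideanSpace.equiv (Fin d) ℝ).symm (fun j => y ⟨(j:ℕ), by omega⟩), ?_⟩
    rw [Set.mem_iInter]
    intro i
    refine ⟨π (x i), ?_, ?_⟩
    · -- in the face
      intro k hk
      rw [hπ]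
      show ((x i : stdSimplex ℝ (Fin (N+(r-1)+1))) : Fin (N+(r-1)+1) → ℝ) (emb k)
        + (if k = 0 then t (x i) else 0) = 0
      have h1 : ((x i : stdSimplex ℝ (Fin (N+(r-1)+1))) : Fin (N+(r-1)+1) → ℝ) (emb k) = 0 := by
        apply hxface i
        intro hc
        exact hk ((mem_σ i k).2 hc)
      rw [h1, htzero i]
      simp
    · -- maps to the point
      ext j
      show f (π (x i)) j = y ⟨(j:ℕ), by omega⟩
      have : f' (x i) ⟨(j:ℕ), by omega⟩ = y ⟨(j:ℕ), by omega⟩ := by rw [hxy i]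
      rw [hf'coord, hg] at this
      simp only [dif_pos j.isLt] at this
      rw [← this]
end

section
/- Let d ≥ 1, let r ≥ 2 be a prime, let N = (d+1)(r−1), and let k ≥ 1. Suppose that BMZ(d+k, r, ℝ^{d+k}) holds for every special coloring of Δ_{N'}, N' = (d+k+1)(r−1). Then BMZ(d, r, ℝ^d) holds for every general coloring C_0, C_1, …, C_{d+k} of Δ_N into d+k+1 classes with |C_i| ≤ r−1 for all i. -/
namespace BMZaux

def embF (n n' : ℕ) (h : n ≤ n') : Fin n ↪ Fin n' :=
  ⟨fun j => ⟨j.val, lt_of_lt_of_le j.isLt h⟩, fun a b hab => Fin.ext (congrArg Fin.val hab : _)⟩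

@[simp] lemma embF_val (n n' : ℕ) (h : n ≤ n') (j : Fin n) : (embF n n' h j).val = j.val := rfl

lemma mem_map_embF (n n' : ℕ) (h : n ≤ n') (v : Fin n') :
    v ∈ Finset.univ.map (embF n n' h) ↔ v.val < n := by
  simp only [Finset.mem_map, Finset.mem_univ, true_and]
  constructor
  · rintro ⟨a, rfl⟩; exact a.isLt
  · intro hv; exact ⟨⟨v.val, hv⟩, Fin.ext rfl⟩

def sNew (n n' : ℕ) (h : n ≤ n') (x : stdSimplex ℝ (Fin n')) : ℝ :=
  ∑ i ∈ (Finset.univ.map (embF n n' h))ᶜ, (x : Fin n' → ℝ) i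

lemma sNew_nonneg (n n' : ℕ) (h : n ≤ n') (x : stdSimplex ℝ (Fin n')) : 0 ≤ sNew n n' h x :=
  Finset.sum_nonneg fun i _ => x.2.1 i

lemma sNew_eq_zero (n n' : ℕ) (h : n ≤ n') (x : stdSimplex ℝ (Fin n'))
    (hx : ∀ v : Fin n', n ≤ v.val → (x : Fin n' → ℝ) v = 0) : sNew n n' h x = 0 := by
  refine Finset.sum_eq_zero fun v hv => ?_
  rw [Finset.mem_compl, mem_map_embF] at hv
  exact hx v (by omega)

def retract (m n' : ℕ) (h : m+1 ≤ n') (x : stdSimplex ℝ (Fin n')) :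
    stdSimplex ℝ (Fin (m+1)) :=
  ⟨fun j => (x : Fin n' → ℝ) (embF (m+1) n' h j) + (if j = 0 then sNew (m+1) n' h x else 0),
   by
     constructor
     · intro j
       show 0 ≤ _ + _
       have h1 : 0 ≤ (x : Fin n' → ℝ) (embF (m+1) n' h j) := x.2.1 (embF (m+1) n' h j)
       have h2 := sNew_nonneg (m+1) n' h x
       split_ifs <;> linarith
     · rw [Finset.sum_add_distrib]
       rw [Finset.sum_ite_eq' Finset.univ (0 : Fin (m+1)) (fun _ => sNew (m+1) n' h x)]
       simp only [Finset.mem_univ, if_true]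
       rw [← Finset.sum_map Finset.univ (embF (m+1) n' h) (fun i => (x : Fin n' → ℝ) i)]
       rw [sNew, Finset.sum_add_sum_compl]
       exact x.2.2⟩

lemma retract_coord (m n' : ℕ) (h : m+1 ≤ n') (x : stdSimplex ℝ (Fin n')) (j : Fin (m+1)) :
    (retract m n' h x : Fin (m+1) → ℝ) j
      = (x : Fin n' → ℝ) (embF (m+1) n' h j) + (if j = 0 then sNew (m+1) n' h x else 0) := rfl

lemma continuous_retract (m n' : ℕ) (h : m+1 ≤ n') : Continuous (retract m n' h) := by
  apply Continuous.subtype_mk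
  apply continuous_pi
  intro j
  apply Continuous.add
  · exact (continuous_apply _).comp continuous_subtype_val
  · split_ifs
    · exact continuous_finset_sum _ fun i _ => (continuous_apply i).comp continuous_subtype_val
    · exact continuous_const

lemma main (r d k : ℕ) (hr : 2 ≤ r) (hk : 1 ≤ k)
    (e : ℕ) (he : e = r - 1) (he1 : 1 ≤ e)
    (K : ℕ) (hKke : K = k * e) (hK1 : 1 ≤ K)
    (M M' : ℕ) (hM' : M' = M + K)
    (htot : (d+k+1) * e = M + K)
    (C : Fin (d+k+1) → Finset (Fin (M+1)))
    (hC : IsColoring C) (hCcard : ∀ i, (C i).card ≤ e)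
    (hyp : ∀ C' : Fin (d+k+2) → Finset (Fin (M'+1)),
      IsSpecialColoring (d+k) r M' C' → BMZ r C' (EuclideanSpace ℝ (Fin (d+k)))) :
    BMZ r C (EuclideanSpace ℝ (Fin d)) := by
  intro f hf
  have hMM1 : M + 1 ≤ M' + 1 := by omega
  -- class sizes and deficits
  set c' : ℕ → ℕ := fun j => if h : j < d+k+1 then (C ⟨j, h⟩).card else 0 with hc'
  set Df : ℕ → ℕ := fun j => e - c' j with hDf
  set o : ℕ → ℕ := fun i => ∑ j ∈ Finset.range i, Df j with ho
  have hc'le : ∀ j, c' j ≤ e := by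
    intro j; simp only [hc']; split
    · exact hCcard _
    · omega
  have hDfc : ∀ j, Df j + c' j = e := by
    intro j; have := hc'le j; simp only [hDf]; omega
  have hcsum : ∑ j ∈ Finset.range (d+k+1), c' j = M + 1 := by
    have h2 := Finset.card_biUnion (s := Finset.univ) (t := C) (fun x _ y _ hxy => hC.1 x y hxy)
    rw [hC.2, Finset.card_univ, Fintype.card_fin] at h2
    have h3 : ∑ j ∈ Finset.range (d+k+1), c' j = ∑ u : Fin (d+k+1), (C u).card := by
      rw [← Fin.sum_univ_eq_sum_range (fun j => c' j) (d+k+1)]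
      refine Finset.sum_congr rfl fun i _ => ?_
      simp only [hc']
      rw [dif_pos i.isLt, Fin.eta]
    rw [h3, ← h2]
  have hDsum : (∑ j ∈ Finset.range (d+k+1), Df j) + 1 = K := by
    have h1 : ∑ j ∈ Finset.range (d+k+1), (Df j + c' j) = (d+k+1) * e := by
      rw [Finset.sum_congr rfl fun j _ => hDfc j, Finset.sum_const, Finset.card_range,
        smul_eq_mul]
    rw [htot, Finset.sum_add_distrib, hcsum] at h1
    omega
  have ho_lt : ∀ p q : ℕ, p < q → o p + Df p ≤ o q := by
    intro p q hpq
    simp only [ho]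
    rw [← Finset.sum_range_succ]
    exact Finset.sum_le_sum_of_subset (Finset.range_subset_range.mpr (by omega))
  have hoDle : ∀ i : ℕ, i < d+k+1 → o i + Df i ≤ K - 1 := by
    intro i hi
    have h1 := ho_lt i (d+k+1) hi
    have h2 : o (d+k+1) = ∑ j ∈ Finset.range (d+k+1), Df j := by simp only [ho]
    omega
  -- padding sets
  set pad : Fin (d+k+1) → Finset (Fin (M'+1)) := fun i =>
    (Finset.Ico (M+1 + o i.val) (M+1 + o i.val + Df i.val)).attachFin
      (fun m hm => by
        rw [Finset.mem_Ico] at hm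
        have h1 := hoDle i.val i.isLt
        omega) with hpad
  have hpadmem : ∀ (i : Fin (d+k+1)) (v : Fin (M'+1)), v ∈ pad i ↔
      (M+1 + o i.val ≤ v.val ∧ v.val < M+1 + o i.val + Df i.val) := by
    intro i v; simp only [hpad, Finset.mem_attachFin, Finset.mem_Ico]
  have hpadcard : ∀ i, (pad i).card = Df i.val := by
    intro i; simp only [hpad]
    rw [Finset.card_attachFin, Nat.card_Ico]; omega
  -- the special coloring
  set C' : Fin (d+k+2) → Finset (Fin (M'+1)) := fun j =>
    if h : j.val < d+k+1 then
      (C ⟨j.val, h⟩).map (embF (M+1) (M'+1) hMM1) ∪ pad ⟨j.val, h⟩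
    else {⟨M', Nat.lt_succ_self _⟩} with hC'
  have hmapval : ∀ (jj : Fin (d+k+1)) (v : Fin (M'+1)),
      v ∈ (C jj).map (embF (M+1) (M'+1) hMM1) → v.val < M+1 := by
    intro jj v hv; rw [Finset.mem_map] at hv; obtain ⟨a, _, rfl⟩ := hv; exact a.isLt
  have hC'disj : ∀ i j, i ≠ j → Disjoint (C' i) (C' j) := by
    have key : ∀ i j : Fin (d+k+2), i ≠ j → i.val < d+k+1 →
        ∀ v, v ∈ C' i → v ∈ C' j → False := by
      intro i j hij hi v hvi hvj
      simp only [hC', dif_pos hi, Finset.mem_union] at hvi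
      by_cases hj : j.val < d+k+1
      · simp only [hC', dif_pos hj, Finset.mem_union] at hvj
        rcases hvi with hvi | hvi <;> rcases hvj with hvj | hvj
        · rw [Finset.mem_map] at hvi hvj
          obtain ⟨a, ha, rfl⟩ := hvi
          obtain ⟨b, hb, hba⟩ := hvj
          have hba' : b = a := (embF (M+1) (M'+1) hMM1).injective hba
          subst hba'
          have hne : (⟨i.val, hi⟩ : Fin (d+k+1)) ≠ ⟨j.val, hj⟩ := by
            intro hh
            exact hij (Fin.ext (congrArg Fin.val hh : _))
          exact Finset.disjoint_left.mp (hC.1 _ _ hne) ha hb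
        · have h1 := hmapval _ _ hvi
          rw [hpadmem] at hvj
          simp only [Fin.val_mk] at hvj
          omega
        · have h1 := hmapval _ _ hvj
          rw [hpadmem] at hvi
          simp only [Fin.val_mk] at hvi
          omega
        · rw [hpadmem] at hvi hvj
          simp only [Fin.val_mk] at hvi hvj
          have hne : i.val ≠ j.val := fun hh => hij (Fin.ext hh)
          rcases Nat.lt_or_ge i.val j.val with hlt | hge
          · have := ho_lt i.val j.val hlt; omega
          · have hlt : j.val < i.val := by omega
            have := ho_lt j.val i.val hlt; omega
      · simp only [hC', dif_neg hj, Finset.mem_singleton] at hvj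
        have hvval : v.val = M' := by rw [hvj]
        rcases hvi with hvi | hvi
        · have h1 := hmapval _ _ hvi; omega
        · rw [hpadmem] at hvi
          simp only [Fin.val_mk] at hvi
          have h1 := hoDle i.val hi
          omega
    intro i j hij
    rw [Finset.disjoint_left]
    intro v hvi hvj
    by_cases hi : i.val < d+k+1
    · exact key i j hij hi v hvi hvj
    · by_cases hj : j.val < d+k+1
      · exact key j i (Ne.symm hij) hj v hvj hvi
      · have : i = j := by
          apply Fin.ext
          have := i.isLt; have := j.isLt
          omega
        exact hij this
  have hC'cardlt : ∀ (j : Fin (d+k+2)), j.val < d+k+1 → (C' j).card = r - 1 := by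
    intro j hj
    simp only [hC', dif_pos hj]
    rw [Finset.card_union_of_disjoint, Finset.card_map, hpadcard]
    · simp only [Fin.val_mk]
      have h1 := hDfc j.val
      have h2 : c' j.val = (C ⟨j.val, hj⟩).card := by
        simp only [hc']; rw [dif_pos hj]
      omega
    · rw [Finset.disjoint_left]
      intro v hv1 hv2
      have := hmapval _ _ hv1
      rw [hpadmem] at hv2
      simp only [Fin.val_mk] at hv2
      omega
  have hlastnot : ¬ ((⟨d+k+1, by omega⟩ : Fin (d+k+2)).val < d+k+1) := by
    simp
  have hcover : Finset.univ.biUnion C' = Finset.univ := by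
    apply Finset.eq_univ_of_card
    rw [Finset.card_biUnion (fun x _ y _ hxy => hC'disj x y hxy), Fintype.card_fin,
      Fin.sum_univ_castSucc]
    have h1 : ∀ i : Fin (d+k+1), (C' i.castSucc).card = r - 1 := by
      intro i
      exact hC'cardlt _ (by simpa using i.isLt)
    rw [Finset.sum_congr rfl (fun i _ => h1 i), Finset.sum_const, Finset.card_univ,
      Fintype.card_fin, smul_eq_mul]
    have h2 : (C' (Fin.last (d+k+1))).card = 1 := by
      simp only [hC', dif_neg (show ¬ (Fin.last (d+k+1)).val < d+k+1 by simp [Fin.last])]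
      exact Finset.card_singleton _
    rw [h2]
    have h3 : (d+k+1) * (r-1) = (d+k+1) * e := by rw [he]
    omega
  have hspecial : IsSpecialColoring (d+k) r M' C' := by
    refine ⟨⟨hC'disj, hcover⟩, fun i hi => hC'cardlt i (by omega), ?_⟩
    simp only [hC', dif_neg hlastnot]
    exact Finset.card_singleton _
  -- the groups of new vertices used as constraints
  set G : ℕ → Finset (Fin (M'+1)) := fun g =>
    (Finset.Ico (M+1 + g * e) (min (M+1 + (g+1) * e) (M'+1))).attachFin
      (fun m hm => by
        rw [Finset.mem_Ico] at hm
        omega) with hG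
  have hGmem : ∀ (g : ℕ), g < k → ∀ v : Fin (M'+1), (v ∈ G g ↔
      (M+1 + g * e ≤ v.val ∧ v.val < M+1 + (g+1) * e)) := by
    intro g hgk v
    have h1 : (g+1) * e ≤ k * e := Nat.mul_le_mul hgk (le_refl e)
    simp only [hG, Finset.mem_attachFin, Finset.mem_Ico]
    omega
  have hGcard : ∀ g : ℕ, g < k → (G g).card = e := by
    intro g hgk
    have h1 : (g+1) * e ≤ k * e := Nat.mul_le_mul hgk (le_refl e)
    have h2 : (g+1) * e = g * e + e := by ring
    simp only [hG]
    rw [Finset.card_attachFin, Nat.card_Ico]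
    omega
  obtain ⟨f', hf'⟩ : ∃ f' : stdSimplex ℝ (Fin (M'+1)) → EuclideanSpace ℝ (Fin (d+k)),
      f' = fun x => (EuclideanSpace.equiv (Fin (d+k)) ℝ).symm (fun j =>
        if h : j.val < d then f (retract M (M'+1) hMM1 x) ⟨j.val, h⟩
        else ∑ v ∈ G (j.val - d), (x : Fin (M'+1) → ℝ) v) := ⟨_, rfl⟩
  have heval : ∀ (x : stdSimplex ℝ (Fin (M'+1))) (jj : Fin (d+k)),
      f' x jj = if h : jj.val < d then f (retract M (M'+1) hMM1 x) ⟨jj.val, h⟩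
        else ∑ v ∈ G (jj.val - d), (x : Fin (M'+1) → ℝ) v := by
    intro x jj; rw [hf']; rfl
  have hf'cont : Continuous f' := by
    rw [hf']
    refine ((EuclideanSpace.equiv (Fin (d+k)) ℝ).symm.continuous).comp (continuous_pi ?_)
    intro j
    by_cases h : j.val < d
    · simp only [dif_pos h]
      exact ((EuclideanSpace.proj (⟨j.val, h⟩ : Fin d)).continuous).comp
        (hf.comp (continuous_retract M (M'+1) hMM1))
    · simp only [dif_neg h]
      exact continuous_finset_sum _ fun v _ => (continuous_apply v).comp continuous_subtype_val
  -- apply the hypothesis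
  obtain ⟨σ', hrain', hdisj', hne'⟩ := hyp C' hspecial f' hf'cont
  obtain ⟨y, hy⟩ := hne'
  rw [Set.mem_iInter] at hy
  simp only [Set.mem_image] at hy
  choose xi hxi hfxi using hy
  -- all new coordinates of the points xi vanish
  have hgrp0 : ∀ (g : ℕ), g < k → ∀ (i : Fin r) (v : Fin (M'+1)), v ∈ G g →
      (xi i : Fin (M'+1) → ℝ) v = 0 := by
    intro g hgk i v hv
    have hjj : d + g < d + k := by omega
    have hGind : G ((⟨d + g, hjj⟩ : Fin (d+k)).val - d) = G g := by
      congr 1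
      simp only [Fin.val_mk]
      omega
    have hcoord : ∀ i' : Fin r,
        f' (xi i') ⟨d + g, hjj⟩ = ∑ v ∈ G g, (xi i' : Fin (M'+1) → ℝ) v := by
      intro i'
      rw [heval, dif_neg (show ¬ (⟨d + g, hjj⟩ : Fin (d+k)).val < d by
        simp only [Fin.val_mk]; omega)]
      rw [hGind]
    -- some face misses the group g
    have hmiss : ∃ i0 : Fin r, ∀ w ∈ G g, w ∉ σ' i0 := by
      by_contra hcon
      push_neg at hcon
      choose w hw1 hw2 using hcon
      have hwinj : ∀ a ∈ (Finset.univ : Finset (Fin r)), ∀ b ∈ Finset.univ,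
          w a = w b → a = b := by
        intro a _ b _ hab
        by_contra hne
        exact Finset.disjoint_left.mp (hdisj' a b hne) (hw2 a) (hab ▸ hw2 b)
      have hle := Finset.card_le_card_of_injOn w (fun a _ => hw1 a) hwinj
      rw [Finset.card_univ, Fintype.card_fin, hGcard g hgk] at hle
      omega
    obtain ⟨i0, hi0⟩ := hmiss
    have hz0 : f' (xi i0) ⟨d + g, hjj⟩ = 0 := by
      rw [hcoord i0]
      exact Finset.sum_eq_zero fun w hw => hxi i0 w (hi0 w hw)
    have hyjj : y ⟨d + g, hjj⟩ = 0 := by rw [← hfxi i0]; exact hz0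
    have hsum0 : ∑ v ∈ G g, (xi i : Fin (M'+1) → ℝ) v = 0 := by
      rw [← hcoord i, hfxi i]; exact hyjj
    exact (Finset.sum_eq_zero_iff_of_nonneg (fun v _ => (xi i).2.1 v)).mp hsum0 v hv
  have hnew0 : ∀ (i : Fin r) (v : Fin (M'+1)), M + 1 ≤ v.val →
      (xi i : Fin (M'+1) → ℝ) v = 0 := by
    intro i v hv
    have hvlt : v.val < M' + 1 := v.isLt
    obtain ⟨t, htdef⟩ : ∃ t, t = v.val - (M+1) := ⟨_, rfl⟩
    have htke : t < k * e := by omega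
    obtain ⟨q, hqdef⟩ : ∃ q, q = t / e := ⟨_, rfl⟩
    have hqk : q < k := by
      rw [hqdef]
      exact (Nat.div_lt_iff_lt_mul (by omega)).mpr htke
    have hdm : e * q + t % e = t := by rw [hqdef]; exact Nat.div_add_mod t e
    have hmlt : t % e < e := Nat.mod_lt _ (by omega)
    have hcm : q * e = e * q := Nat.mul_comm q e
    have hsm : (q+1) * e = q * e + e := by ring
    have hvG : v ∈ G q := by
      rw [hGmem q hqk]
      omega
    exact hgrp0 q hqk i v hvG
  -- the retracted points lie in the small simplex faces
  obtain ⟨σi, hσi⟩ : ∃ σi : Fin r → Finset (Fin (M+1)), σi = fun i =>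
      Finset.univ.filter (fun a => embF (M+1) (M'+1) hMM1 a ∈ σ' i) := ⟨_, rfl⟩
  have hptcoord : ∀ (i : Fin r) (a : Fin (M+1)),
      (retract M (M'+1) hMM1 (xi i) : Fin (M+1) → ℝ) a
        = (xi i : Fin (M'+1) → ℝ) (embF (M+1) (M'+1) hMM1 a) := by
    intro i a
    rw [retract_coord, sNew_eq_zero _ _ _ _ (fun v hv => hnew0 i v hv)]
    split_ifs <;> simp
  have hptface : ∀ i : Fin r, retract M (M'+1) hMM1 (xi i) ∈ simplexFace M (σi i) := by
    intro i a ha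
    simp only [hσi, Finset.mem_filter, Finset.mem_univ, true_and] at ha
    rw [hptcoord]
    exact hxi i _ ha
  -- the common point
  obtain ⟨z, hz⟩ : ∃ z : EuclideanSpace ℝ (Fin d), z = (EuclideanSpace.equiv (Fin d) ℝ).symm
      (fun j => y ⟨j.val, by have := j.isLt; omega⟩) := ⟨_, rfl⟩
  have hfz : ∀ i : Fin r, f (retract M (M'+1) hMM1 (xi i)) = z := by
    intro i
    rw [hz]
    refine (EuclideanSpace.equiv (Fin d) ℝ).injective (funext fun j => ?_)
    show f (retract M (M'+1) hMM1 (xi i)) j = y ⟨j.val, by have := j.isLt; omega⟩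
    have hjlt : (j.val : ℕ) < d + k := by have := j.isLt; omega
    have h2 := heval (xi i) ⟨j.val, hjlt⟩
    rw [dif_pos (show (⟨j.val, hjlt⟩ : Fin (d+k)).val < d from j.isLt)] at h2
    rw [← hfxi i, h2]
  refine ⟨σi, ?_, ?_, ⟨z, ?_⟩⟩
  · intro i j
    have hjv : (j.val : ℕ) < d+k+1 := j.isLt
    have hstep : (σi i ∩ C j).card ≤ (σ' i ∩ C' ⟨j.val, by omega⟩).card := by
      apply Finset.card_le_card_of_injOn (fun a => embF (M+1) (M'+1) hMM1 a)
      · intro a ha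
        rw [Finset.mem_coe, Finset.mem_inter] at ha ⊢
        constructor
        · have := ha.1
          simp only [hσi, Finset.mem_filter, Finset.mem_univ, true_and] at this
          exact this
        · simp only [hC', dif_pos hjv]
          apply Finset.mem_union_left
          refine Finset.mem_map_of_mem _ ?_
          have : (⟨(⟨j.val, by omega⟩ : Fin (d+k+2)).val, hjv⟩ : Fin (d+k+1)) = j :=
            Fin.ext rfl
          rw [this]
          exact ha.2
      · intro a _ b _ hab
        exact (embF (M+1) (M'+1) hMM1).injective hab
    exact le_trans hstep (hrain' i ⟨j.val, by omega⟩)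
  · intro i j hij
    rw [Finset.disjoint_left]
    intro a hai haj
    simp only [hσi, Finset.mem_filter, Finset.mem_univ, true_and] at hai haj
    exact Finset.disjoint_left.mp (hdisj' i j hij) hai haj
  · rw [Set.mem_iInter]
    intro i
    exact ⟨retract M (M'+1) hMM1 (xi i), hptface i, hfz i⟩


end BMZaux

/-- **Proposition 2.5**: the reduction for a general coloring into `d+k+1`
classes, assuming BMZ for special colorings `k` dimensions up. -/
theorem reduction_prop_general (d r k : ℕ) (hd : 1 ≤ d) (hr : 2 ≤ r) (hrp : r.Prime)
    (hk : 1 ≤ k) (N : ℕ) (hN : N = (d+1)*(r-1))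
    (hyp : ∀ C' : Fin (d+k+2) → Finset (Fin ((d+k+1)*(r-1)+1)),
      IsSpecialColoring (d+k) r ((d+k+1)*(r-1)) C' →
      BMZ r C' (EuclideanSpace ℝ (Fin (d+k)))) :
    ∀ C : Fin (d+k+1) → Finset (Fin (N+1)),
      IsColoring C → (∀ i, (C i).card ≤ r - 1) →
      BMZ r C (EuclideanSpace ℝ (Fin d)) := by
  subst hN
  intro C hC hCcard
  exact BMZaux.main r d k hr hk (r-1) rfl (by omega) (k*(r-1)) rfl
    (by
      have h1 : 1 * 1 ≤ k * (r-1) := Nat.mul_le_mul hk (by omega)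
      omega)
    ((d+1)*(r-1)) ((d+k+1)*(r-1)) (by ring) (by ring) C hC hCcard hyp
end

section
/- (Reduction Lemma for maps to manifolds) Let d ≥ 1, r ≥ 2, and N = (d+1)(r−1), and let M be a topological d-manifold (a second-countable Hausdorff topological space in which every point has a neighborhood homeomorphic to an open subset of ℝ^d). Let 𝕀 = [0,1] denote the unit interval. Suppose that for every k ≥ 0, BMZ(d+k, r, M × 𝕀^k) holds for every special coloring of Δ_{N_k}, N_k = (d+k+1)(r−1). Then BMZ(d, r, M) holds for every general coloring of Δ_N. -/
open Finset

lemma aux_card_compl_lt (n c : ℕ) (h : c ≤ n) :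
    Fintype.card {w : Fin n // ¬ ((w : ℕ) < c)} = n - c := by
  have e : {w : Fin n // ((w : ℕ) < c)} ≃ Fin c :=
    { toFun := fun w => ⟨(w.1 : ℕ), w.2⟩
      invFun := fun b => ⟨⟨(b : ℕ), lt_of_lt_of_le b.2 h⟩, b.2⟩
      left_inv := fun w => Subtype.ext (Fin.ext rfl)
      right_inv := fun b => rfl }
  rw [Fintype.card_subtype_compl, Fintype.card_congr e, Fintype.card_fin, Fintype.card_fin]

lemma aux_partition {α : Type*} [Fintype α] [DecidableEq α] {m : ℕ} (t : Fin m → ℕ)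
    (h : Fintype.card α = ∑ j, t j) :
    ∃ φ : α → Fin m, ∀ j, (univ.filter fun a => φ a = j).card = t j := by
  have h2 : Fintype.card α = Fintype.card (Σ j : Fin m, Fin (t j)) := by
    simp [Fintype.card_sigma, h]
  obtain e := Fintype.equivOfCardEq h2
  refine ⟨fun a => (e a).1, fun j => ?_⟩
  classical
  have e3 : {s : Σ j' : Fin m, Fin (t j') // s.1 = j} ≃ Fin (t j) :=
    { toFun := fun s => Fin.cast (congrArg t s.2) s.1.2
      invFun := fun b => ⟨⟨j, b⟩, rfl⟩
      left_inv := by rintro ⟨⟨j', b⟩, h⟩; cases h; rfl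
      right_inv := fun b => rfl }
  have e2 : {a // (e a).1 = j} ≃ Fin (t j) :=
    (e.subtypeEquiv (q := fun s => s.1 = j) (fun a => Iff.rfl)).trans e3
  rw [← Fintype.card_subtype]
  rw [Fintype.card_congr e2, Fintype.card_fin]

lemma aux_filter_exists_card {n : ℕ} (p : Fin n → Prop) [DecidablePred p]
    (q : {w : Fin n // p w} → Prop) [DecidablePred q] :
    (univ.filter fun w => ∃ h : p w, q ⟨w, h⟩).card = (univ.filter q).card := by
  rw [← Fintype.card_subtype, ← Fintype.card_subtype]
  exact Fintype.card_congr
    { toFun := fun w => ⟨⟨w.1, w.2.choose⟩, w.2.choose_spec⟩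
      invFun := fun s => ⟨s.1.1, s.1.2, s.2⟩
      left_inv := fun w => rfl
      right_inv := fun s => rfl }



/-- **Reduction Lemma for maps to manifolds.** `M` is a second-countable
Hausdorff space, each of whose points has a neighborhood homeomorphic to an
open subset of `ℝ^d` (a chart into `EuclideanSpace ℝ (Fin d)`); `𝕀^k` is the
`k`-fold power of the unit interval `[0,1]`. If for every `k ≥ 0`,
BMZ(d+k, r, M × 𝕀^k) holds for every special coloring of `Δ_{N_k}`,
`N_k = (d+k+1)(r-1)`, then BMZ(d, r, M) holds for every general coloring of
`Δ_N`, `N = (d+1)(r-1)`. -/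
theorem reduction_lemma_manifold (d r : ℕ) (hd : 1 ≤ d) (hr : 2 ≤ r)
    (M : Type*) [TopologicalSpace M] [T2Space M] [SecondCountableTopology M]
    [ChartedSpace (EuclideanSpace ℝ (Fin d)) M]
    (hyp : ∀ k : ℕ, ∀ C : Fin (d+k+2) → Finset (Fin ((d+k+1)*(r-1)+1)),
      IsSpecialColoring (d+k) r ((d+k+1)*(r-1)) C →
      BMZ r C (M × (Fin k → (Set.Icc (0:ℝ) 1)))) :
    ∀ m : ℕ, ∀ C : Fin m → Finset (Fin ((d+1)*(r-1)+1)),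
      IsColoring C → (∀ i, (C i).card ≤ r - 1) →
      BMZ r C M := by
  intro m C hcol hCcard f hf
  classical
  -- sum of class sizes
  have hsum : ∑ j, (C j).card = (d+1)*(r-1)+1 := by
    have h1 := Finset.card_biUnion (fun i (_ : i ∈ (univ : Finset (Fin m))) j _ hij => hcol.1 i j hij)
    rw [hcol.2] at h1
    simpa using h1.symm
  have hm : d + 2 ≤ m := by
    by_contra hmle
    push_neg at hmle
    have h2 : ∑ j : Fin m, (C j).card ≤ ∑ _j : Fin m, (r-1) :=
      Finset.sum_le_sum fun j _ => hCcard j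
    rw [hsum, Finset.sum_const, Finset.card_univ, Fintype.card_fin, smul_eq_mul] at h2
    have h3 : m * (r-1) ≤ (d+1) * (r-1) := Nat.mul_le_mul_right _ (by omega)
    exact Nat.not_succ_le_self _ (h2.trans h3)
  obtain ⟨k, hk⟩ : ∃ k, m = d + k + 1 := ⟨m - d - 1, by omega⟩
  subst hk
  have hk1 : 1 ≤ k := by omega
  have hA : (d+k+1)*(r-1) = (d+1)*(r-1) + k*(r-1) := by ring
  have hkr : 1 ≤ k * (r-1) := Nat.mul_pos (by omega) (by omega)
  have hn12 : (d+1)*(r-1)+1 ≤ (d+k+1)*(r-1)+1 := by omega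
  -- color function downstairs
  have hexc : ∀ v : Fin ((d+1)*(r-1)+1), ∃ i, v ∈ C i := by
    intro v
    have hv : v ∈ Finset.univ.biUnion C := by rw [hcol.2]; exact mem_univ v
    simpa using hv
  choose c hc using hexc
  have hcu : ∀ v j, v ∈ C j → c v = j := by
    intro v j hv
    by_contra hne
    exact (Finset.disjoint_left.mp (hcol.1 _ _ hne) (hc v)) hv
  -- target sizes for new vertices
  set target : Fin (d+k+2) → ℕ :=
    fun j => if h : (j:ℕ) < d+k+1 then r - 1 - (C ⟨(j:ℕ),h⟩).card else 1 with htarget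
  have hcardNew : Fintype.card {w : Fin ((d+k+1)*(r-1)+1) // ¬ ((w:ℕ) < (d+1)*(r-1)+1)}
      = k*(r-1) := by
    rw [aux_card_compl_lt _ _ hn12]; omega
  have htsum : ∑ j, target j = k*(r-1) := by
    rw [Fin.sum_univ_castSucc]
    have hlast : target (Fin.last (d+k+1)) = 1 := by
      simp only [htarget]; exact dif_neg (by simp [Fin.last])
    have hcs : ∀ i : Fin (d+k+1), target i.castSucc = r - 1 - (C i).card := by
      intro i
      simp only [htarget]
      have hi : ((i.castSucc : Fin (d+k+2)) : ℕ) < d+k+1 := by simp [i.isLt]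
      rw [dif_pos hi]
      have hii : (⟨((i.castSucc : Fin (d+k+2)) : ℕ), hi⟩ : Fin (d+k+1)) = i := Fin.ext rfl
      rw [hii]
    rw [hlast]
    have h4 : ∑ i : Fin (d+k+1), target i.castSucc = ∑ i : Fin (d+k+1), (r - 1 - (C i).card) :=
      Finset.sum_congr rfl fun i _ => hcs i
    have h5 : ∑ i : Fin (d+k+1), (r - 1 - (C i).card) + ∑ i, (C i).card
        = ∑ _i : Fin (d+k+1), (r-1) := by
      rw [← Finset.sum_add_distrib]
      exact Finset.sum_congr rfl fun i _ => by have := hCcard i; omega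
    rw [Finset.sum_const, Finset.card_univ, Fintype.card_fin, smul_eq_mul] at h5
    rw [hsum] at h5
    omega
  obtain ⟨φ, hφ⟩ := aux_partition target (by rw [hcardNew, htsum])
  obtain ⟨gφ, hgφ⟩ := aux_partition (fun _ : Fin k => r-1)
    (by rw [hcardNew, Finset.sum_const, Finset.card_univ, Fintype.card_fin, smul_eq_mul])
  -- upstairs coloring
  set c' : Fin ((d+k+1)*(r-1)+1) → Fin (d+k+2) :=
    fun w => if h : (w:ℕ) < (d+1)*(r-1)+1 then (c ⟨(w:ℕ),h⟩).castSucc else φ ⟨w,h⟩ with hc'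
  set C' : Fin (d+k+2) → Finset (Fin ((d+k+1)*(r-1)+1)) :=
    fun j => univ.filter fun w => c' w = j with hC'
  have hC'mem : ∀ w j, w ∈ C' j ↔ c' w = j := fun w j => by
    rw [hC']; simp
  -- cards of upstairs classes
  have hsplit : ∀ j : Fin (d+k+2), (C' j).card =
      (univ.filter fun w : Fin ((d+k+1)*(r-1)+1) =>
        c' w = j ∧ ((w:ℕ) < (d+1)*(r-1)+1)).card +
      (univ.filter fun w : Fin ((d+k+1)*(r-1)+1) =>
        c' w = j ∧ ¬((w:ℕ) < (d+1)*(r-1)+1)).card := by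
    intro j
    rw [hC']
    rw [← Finset.filter_filter, ← Finset.filter_filter,
      Finset.card_filter_add_card_filter_not]
  have hBcard : ∀ j : Fin (d+k+2),
      (univ.filter fun w : Fin ((d+k+1)*(r-1)+1) =>
        c' w = j ∧ ¬((w:ℕ) < (d+1)*(r-1)+1)).card = target j := by
    intro j
    have heq : (univ.filter fun w : Fin ((d+k+1)*(r-1)+1) =>
        c' w = j ∧ ¬((w:ℕ) < (d+1)*(r-1)+1)) =
        (univ.filter fun w : Fin ((d+k+1)*(r-1)+1) =>
          ∃ h : ¬((w:ℕ) < (d+1)*(r-1)+1), φ ⟨w,h⟩ = j) := by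
      apply Finset.filter_congr
      intro w _
      constructor
      · rintro ⟨h1, h2⟩
        refine ⟨h2, ?_⟩
        simp only [hc'] at h1; rw [dif_neg h2] at h1
        exact h1
      · rintro ⟨h1, h2⟩
        exact ⟨by simp only [hc']; rw [dif_neg h1]; exact h2, h1⟩
    rw [heq, aux_filter_exists_card (fun w : Fin ((d+k+1)*(r-1)+1) => ¬((w:ℕ) < (d+1)*(r-1)+1)) (fun a => φ a = j), hφ]
  have hAcard : ∀ j : Fin (d+k+1),
      (univ.filter fun w : Fin ((d+k+1)*(r-1)+1) =>
        c' w = j.castSucc ∧ ((w:ℕ) < (d+1)*(r-1)+1)).card = (C j).card := by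
    intro j
    apply Finset.card_bij (fun (w : Fin ((d+k+1)*(r-1)+1)) hw =>
      (⟨(w:ℕ), (Finset.mem_filter.mp hw).2.2⟩ : Fin ((d+1)*(r-1)+1)))
    · intro w hw
      obtain ⟨-, h1, h2⟩ := Finset.mem_filter.mp hw
      simp only [hc'] at h1; rw [dif_pos h2] at h1
      have : c ⟨(w:ℕ), h2⟩ = j := by
        apply Fin.ext
        have := congrArg (Fin.val) h1
        simpa using this
      have h3 := hc ⟨(w:ℕ), h2⟩
      rw [this] at h3
      exact h3
    · intro w1 hw1 w2 hw2 hww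
      injection hww with h
      exact Fin.ext h
    · intro v hv
      refine ⟨Fin.castLE hn12 v, ?_, ?_⟩
      · rw [Finset.mem_filter]
        refine ⟨mem_univ _, ?_, v.isLt⟩
        simp only [hc']; rw [dif_pos (show ((Fin.castLE hn12 v : Fin ((d+k+1)*(r-1)+1)):ℕ) < (d+1)*(r-1)+1 from v.isLt)]
        have hv' : (⟨((Fin.castLE hn12 v):ℕ), v.isLt⟩ : Fin ((d+1)*(r-1)+1)) = v := Fin.ext rfl
        rw [hv', hcu v j hv]
      · exact Fin.ext rfl
  have hspec : IsSpecialColoring (d+k) r ((d+k+1)*(r-1)) C' := by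
    refine ⟨⟨?_, ?_⟩, ?_, ?_⟩
    · intro i j hij
      rw [Finset.disjoint_left]
      intro a ha hb
      rw [hC'mem] at ha hb
      exact hij (ha ▸ hb ▸ rfl)
    · ext w
      simp only [Finset.mem_biUnion, Finset.mem_univ, iff_true, true_and]
      exact ⟨c' w, (hC'mem w _).mpr rfl⟩
    · intro j hj
      have hjlt : (j:ℕ) < d+k+1 := by omega
      have hj' : j = (⟨(j:ℕ), hjlt⟩ : Fin (d+k+1)).castSucc := Fin.ext rfl
      rw [hsplit j, hBcard j]
      rw [hj', hAcard ⟨(j:ℕ), hjlt⟩]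
      have ht : target (⟨(j:ℕ), hjlt⟩ : Fin (d+k+1)).castSucc
          = r - 1 - (C ⟨(j:ℕ), hjlt⟩).card := by
        simp only [htarget]
        rw [dif_pos (show (((⟨(j:ℕ), hjlt⟩ : Fin (d+k+1)).castSucc : Fin (d+k+2)):ℕ) < d+k+1 from hjlt)]
        have hii : (⟨(((⟨(j:ℕ), hjlt⟩ : Fin (d+k+1)).castSucc : Fin (d+k+2)):ℕ), hjlt⟩ : Fin (d+k+1))
            = ⟨(j:ℕ), hjlt⟩ := Fin.ext rfl
        rw [hii]
      rw [ht]
      have := hCcard ⟨(j:ℕ), hjlt⟩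
      omega
    · have hlastA : (univ.filter fun w : Fin ((d+k+1)*(r-1)+1) =>
          c' w = (⟨d+k+1, by omega⟩ : Fin (d+k+2)) ∧ ((w:ℕ) < (d+1)*(r-1)+1)).card = 0 := by
        rw [Finset.card_eq_zero, Finset.filter_eq_empty_iff]
        rintro w - ⟨h1, h2⟩
        simp only [hc'] at h1; rw [dif_pos h2] at h1
        have := congrArg Fin.val h1
        simp only [Fin.coe_castSucc] at this
        have hlt := (c ⟨(w:ℕ), h2⟩).isLt
        omega
      have hlastT : target (⟨d+k+1, by omega⟩ : Fin (d+k+2)) = 1 := by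
        simp only [htarget]; exact dif_neg (by simp)
      rw [hsplit, hBcard, hlastA, hlastT]
  -- the auxiliary map downstairs
  have hQmem : ∀ x : stdSimplex ℝ (Fin ((d+k+1)*(r-1)+1)),
      (fun v : Fin ((d+1)*(r-1)+1) => (x : Fin ((d+k+1)*(r-1)+1) → ℝ) (Fin.castLE hn12 v) +
        if v = ⟨0, by omega⟩ then
          ∑ w ∈ univ.filter (fun w : Fin ((d+k+1)*(r-1)+1) => ¬ ((w:ℕ) < (d+1)*(r-1)+1)),
            (x : Fin ((d+k+1)*(r-1)+1) → ℝ) w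
        else 0) ∈ stdSimplex ℝ (Fin ((d+1)*(r-1)+1)) := by
    intro x
    constructor
    · intro v
      refine add_nonneg (x.2.1 _) ?_
      split_ifs
      · exact Finset.sum_nonneg fun w _ => x.2.1 w
      · exact le_refl 0
    · rw [Finset.sum_add_distrib]
      rw [Finset.sum_ite_eq' univ (⟨0, by omega⟩ : Fin ((d+1)*(r-1)+1))]
      rw [if_pos (mem_univ _)]
      have himg : ∑ v : Fin ((d+1)*(r-1)+1), (x : Fin ((d+k+1)*(r-1)+1) → ℝ) (Fin.castLE hn12 v)
          = ∑ w ∈ univ.filter (fun w : Fin ((d+k+1)*(r-1)+1) => ((w:ℕ) < (d+1)*(r-1)+1)),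
            (x : Fin ((d+k+1)*(r-1)+1) → ℝ) w := by
        have hset : univ.filter (fun w : Fin ((d+k+1)*(r-1)+1) => ((w:ℕ) < (d+1)*(r-1)+1))
            = univ.map ⟨Fin.castLE hn12, Fin.castLE_injective hn12⟩ := by
          ext w
          simp only [Finset.mem_map, Finset.mem_filter, Finset.mem_univ, true_and,
            Function.Embedding.coeFn_mk]
          constructor
          · intro hw; exact ⟨⟨(w:ℕ), hw⟩, Fin.ext rfl⟩
          · rintro ⟨v, rfl⟩; exact v.isLt
        rw [hset, Finset.sum_map]
        rfl
      rw [himg, Finset.sum_filter_add_sum_filter_not]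
      exact x.2.2
  set Gset : Fin k → Finset (Fin ((d+k+1)*(r-1)+1)) :=
    fun j => univ.filter fun w => ∃ h : ¬((w:ℕ) < (d+1)*(r-1)+1), gφ ⟨w,h⟩ = j with hGset
  have hGmem : ∀ x : stdSimplex ℝ (Fin ((d+k+1)*(r-1)+1)), ∀ j : Fin k,
      (∑ w ∈ Gset j, (x : Fin ((d+k+1)*(r-1)+1) → ℝ) w) ∈ Set.Icc (0:ℝ) 1 := by
    intro x j
    constructor
    · exact Finset.sum_nonneg fun w _ => x.2.1 w
    · refine le_trans (Finset.sum_le_sum_of_subset_of_nonneg (Finset.subset_univ _)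
        (fun w _ _ => x.2.1 w)) (le_of_eq x.2.2)
  set F : stdSimplex ℝ (Fin ((d+k+1)*(r-1)+1)) → M × (Fin k → Set.Icc (0:ℝ) 1) :=
    fun x => (f ⟨_, hQmem x⟩, fun j => ⟨_, hGmem x j⟩) with hF
  have hFcont : Continuous F := by
    rw [hF]
    refine Continuous.prodMk (hf.comp ?_) ?_
    · refine Continuous.subtype_mk ?_ _
      refine continuous_pi fun v => ?_
      refine Continuous.add ((continuous_apply _).comp continuous_subtype_val) ?_
      split_ifs
      · exact continuous_finset_sum _ fun w _ => (continuous_apply w).comp continuous_subtype_val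
      · exact continuous_const
    · refine continuous_pi fun j => Continuous.subtype_mk ?_ _
      exact continuous_finset_sum _ fun w _ => (continuous_apply w).comp continuous_subtype_val
  obtain ⟨σ, hrain, hdisj, hne⟩ := hyp k C' hspec F hFcont
  obtain ⟨pt, hpt⟩ := hne
  have hmem2 : ∀ i, ∃ x, x ∈ simplexFace ((d+k+1)*(r-1)) (σ i) ∧ F x = pt := by
    intro i
    exact (Set.mem_iInter.mp hpt i)
  choose y hyface hyF using hmem2
  have hyface' : ∀ i w, w ∉ σ i → ((y i : stdSimplex ℝ (Fin ((d+k+1)*(r-1)+1))) :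
      Fin ((d+k+1)*(r-1)+1) → ℝ) w = 0 := fun i => hyface i
  -- all the interval coordinates of pt vanish
  have hGcard : ∀ j, (Gset j).card = r - 1 := by
    intro j
    rw [hGset]
    rw [aux_filter_exists_card (fun w : Fin ((d+k+1)*(r-1)+1) => ¬((w:ℕ) < (d+1)*(r-1)+1)) (fun a => gφ a = j)]
    exact hgφ j
  have hpt2 : ∀ j : Fin k, ((pt.2 j : ℝ)) = 0 := by
    intro j
    have hex : ∃ i, ∀ w ∈ Gset j, w ∉ σ i := by
      by_contra hcon
      push_neg at hcon
      choose a ha1 ha2 using hcon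
      have hle : (univ : Finset (Fin r)).card ≤ (Gset j).card := by
        apply Finset.card_le_card_of_injOn a (fun i _ => ha1 i)
        intro i _ i' _ hii
        by_contra hne'
        exact (Finset.disjoint_left.mp (hdisj i i' hne') (ha2 i)) (hii ▸ ha2 i')
      rw [Finset.card_univ, Fintype.card_fin, hGcard j] at hle
      omega
    obtain ⟨i, hi⟩ := hex
    have h0 : ∑ w ∈ Gset j, ((y i : stdSimplex ℝ (Fin ((d+k+1)*(r-1)+1))) :
        Fin ((d+k+1)*(r-1)+1) → ℝ) w = 0 :=
      Finset.sum_eq_zero fun w hw => hyface' i w (hi w hw)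
    have h2 := congrArg (fun z : M × (Fin k → Set.Icc (0:ℝ) 1) => ((z.2 j : ℝ))) (hyF i)
    simp only [hF] at h2
    rw [← h2]
    exact h0
  have hznew : ∀ (i : Fin r) (w : Fin ((d+k+1)*(r-1)+1)) (h : ¬((w:ℕ) < (d+1)*(r-1)+1)),
      ((y i : stdSimplex ℝ (Fin ((d+k+1)*(r-1)+1))) : Fin ((d+k+1)*(r-1)+1) → ℝ) w = 0 := by
    intro i w h
    have hsum0 : ∑ w' ∈ Gset (gφ ⟨w, h⟩), ((y i : stdSimplex ℝ (Fin ((d+k+1)*(r-1)+1))) :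
        Fin ((d+k+1)*(r-1)+1) → ℝ) w' = 0 := by
      have h2 := congrArg (fun z : M × (Fin k → Set.Icc (0:ℝ) 1) =>
        ((z.2 (gφ ⟨w, h⟩) : ℝ))) (hyF i)
      simp only [hF] at h2
      rw [h2]
      exact hpt2 _
    have hwmem : w ∈ Gset (gφ ⟨w, h⟩) := by
      rw [hGset, Finset.mem_filter]
      exact ⟨mem_univ _, h, rfl⟩
    exact (Finset.sum_eq_zero_iff_of_nonneg (fun w' _ => (y i).2.1 w')).mp hsum0 w hwmem
  -- the downstairs faces
  refine ⟨fun i => univ.filter fun v => Fin.castLE hn12 v ∈ σ i, ?_, ?_, ?_⟩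
  · intro i j
    have hle : ((univ.filter fun v => Fin.castLE hn12 v ∈ σ i) ∩ C j).card
        ≤ (σ i ∩ C' j.castSucc).card := by
      apply Finset.card_le_card_of_injOn (Fin.castLE hn12)
      · intro v hv
        rw [Finset.mem_coe, Finset.mem_inter, Finset.mem_filter] at hv
        rw [Finset.mem_coe, Finset.mem_inter]
        refine ⟨hv.1.2, ?_⟩
        rw [hC'mem]; simp only [hc']
        rw [dif_pos (show ((Fin.castLE hn12 v : Fin ((d+k+1)*(r-1)+1)):ℕ)
          < (d+1)*(r-1)+1 from v.isLt)]
        have hv' : (⟨((Fin.castLE hn12 v):ℕ), v.isLt⟩ : Fin ((d+1)*(r-1)+1)) = v := Fin.ext rfl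
        rw [hv', hcu v j hv.2]
      · intro a _ b _ hab
        exact Fin.castLE_injective hn12 hab
    exact hle.trans (hrain i j.castSucc)
  · intro i i' hii
    rw [Finset.disjoint_left]
    intro v hv hv'
    rw [Finset.mem_filter] at hv hv'
    exact (Finset.disjoint_left.mp (hdisj i i' hii) hv.2) hv'.2
  · refine ⟨pt.1, Set.mem_iInter.mpr fun i => ?_⟩
    refine ⟨⟨_, hQmem (y i)⟩, ?_, ?_⟩
    · intro v hv
      rw [Finset.mem_filter] at hv
      push_neg at hv
      have hvs : Fin.castLE hn12 v ∉ σ i := hv (mem_univ v)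
      have h1 : ((y i : stdSimplex ℝ (Fin ((d+k+1)*(r-1)+1))) :
          Fin ((d+k+1)*(r-1)+1) → ℝ) (Fin.castLE hn12 v) = 0 := hyface' i _ hvs
      have h2 : ∑ w ∈ univ.filter (fun w : Fin ((d+k+1)*(r-1)+1) =>
          ¬ ((w:ℕ) < (d+1)*(r-1)+1)), ((y i : stdSimplex ℝ (Fin ((d+k+1)*(r-1)+1))) :
          Fin ((d+k+1)*(r-1)+1) → ℝ) w = 0 :=
        Finset.sum_eq_zero fun w hw => hznew i w (Finset.mem_filter.mp hw).2
      show ((y i : stdSimplex ℝ (Fin ((d+k+1)*(r-1)+1))) :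
          Fin ((d+k+1)*(r-1)+1) → ℝ) (Fin.castLE hn12 v) + _ = 0
      rw [h1, h2]
      split_ifs <;> simp
    · have h2 := congrArg Prod.fst (hyF i)
      simp only [hF] at h2
      exact h2
end
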